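/- arXiv:0901.4968 — 7 statements merged into one kernel-verified Lean document; each statement's English description precedes it below -/
import Mathlib

section
/- For every real initial condition (x₀, y₀, z₀) ∈ ℝ³ there exist differentiable functions x, y, z : ℝ → ℝ defined for all real t that satisfy the real Lorenz system on all of ℝ and satisfy x(0) = x₀, y(0) = y₀, z(0) = z₀. In particular, a real solution of the Lorenz system has no singularity at any finite real value of t. -/
open Set Real
set_option maxHeartbeats 1000000

namespace LorenzAux
abbrev E3 := ℝ × ℝ × ℝ
noncomputable def F (u : E3) : E3 :=
  (10 * (u.2.1 - u.1), 28 * u.1 - u.2.1 - u.1 * u.2.2, -(8/3) * u.2.2 + u.1 * u.2.1)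
noncomputable def cl (R a : ℝ) : ℝ := max (-R) (min R a)
lemma cl_eq (R a : ℝ) (h : |a| ≤ R) : cl R a = a := by
  rw [abs_le] at h
  simp [cl, max_eq_right, min_eq_right, h.1, h.2]
lemma abs_cl_le (R a : ℝ) (hR : 0 ≤ R) : |cl R a| ≤ R := by
  rw [abs_le]
  exact ⟨le_max_left _ _, max_le (by linarith) (min_le_left _ _)⟩
lemma abs_cl_sub_le (R a b : ℝ) : |cl R a - cl R b| ≤ |a - b| := by
  have h1 : |min R a - min R b| ≤ max |R - R| |a - b| := abs_min_sub_min_le_max R a R b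
  have h2 : |cl R a - cl R b| ≤ max |(-R) - (-R)| |min R a - min R b| :=
    abs_max_sub_max_le_max (-R) (min R a) (-R) (min R b)
  simp only [sub_self, abs_zero] at h1 h2
  rw [max_eq_right (abs_nonneg _)] at h1 h2
  exact h2.trans h1

lemma norm_le_iff (u : E3) (R : ℝ) : ‖u‖ ≤ R ↔ |u.1| ≤ R ∧ |u.2.1| ≤ R ∧ |u.2.2| ≤ R := by
  simp [Prod.norm_def, Real.norm_eq_abs]

noncomputable def G (R : ℝ) (u : E3) : E3 := F (cl R u.1, cl R u.2.1, cl R u.2.2)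

lemma G_eq (R : ℝ) (u : E3) (h : ‖u‖ ≤ R) : G R u = F u := by
  obtain ⟨h1, h2, h3⟩ := (norm_le_iff u R).1 h
  simp only [G, cl_eq _ _ h1, cl_eq _ _ h2, cl_eq _ _ h3]

lemma abs_mul_le {a b c d : ℝ} (h1 : |a| ≤ c) (h2 : |b| ≤ d) : |a * b| ≤ c * d := by
  rw [abs_mul]
  exact mul_le_mul h1 h2 (abs_nonneg _) ((abs_nonneg a).trans h1)

lemma norm_G_le (R : ℝ) (hR : 0 ≤ R) (u : E3) : ‖G R u‖ ≤ 60 * R + 2 * R ^ 2 := by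
  set p := cl R u.1
  set q := cl R u.2.1
  set r := cl R u.2.2
  have hp := abs_cl_le R u.1 hR
  have hq := abs_cl_le R u.2.1 hR
  have hr := abs_cl_le R u.2.2 hR
  have hpq : |p * q| ≤ R * R := abs_mul_le hp hq
  have hpr : |p * r| ≤ R * R := abs_mul_le hp hr
  obtain ⟨hp1, hp2⟩ := abs_le.mp hp
  obtain ⟨hq1, hq2⟩ := abs_le.mp hq
  obtain ⟨hr1, hr2⟩ := abs_le.mp hr
  obtain ⟨hpq1, hpq2⟩ := abs_le.mp hpq
  obtain ⟨hpr1, hpr2⟩ := abs_le.mp hpr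
  rw [norm_le_iff]
  refine ⟨abs_le.mpr ⟨by simp only [G, F]; nlinarith, by simp only [G, F]; nlinarith⟩,
          abs_le.mpr ⟨by simp only [G, F]; nlinarith, by simp only [G, F]; nlinarith⟩,
          abs_le.mpr ⟨by simp only [G, F]; nlinarith, by simp only [G, F]; nlinarith⟩⟩

lemma lipschitz_G (R : ℝ) (hR : 0 ≤ R) :
    LipschitzWith (Real.toNNReal (60 + 2 * R)) (G R) := by
  apply LipschitzWith.of_dist_le_mul
  intro u v
  have hC : (Real.toNNReal (60 + 2 * R) : ℝ) = 60 + 2 * R := Real.coe_toNNReal _ (by linarith)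
  rw [hC]
  set d := dist u v with hd
  have hd1 : |u.1 - v.1| ≤ d := by
    rw [hd, Prod.dist_eq]
    exact le_trans (le_of_eq (Real.dist_eq _ _).symm) (le_max_left _ _)
  have hd2 : |u.2.1 - v.2.1| ≤ d := by
    rw [hd, Prod.dist_eq, Prod.dist_eq]
    refine le_trans (le_of_eq (Real.dist_eq _ _).symm) (le_trans (le_max_left _ _) (le_max_right _ _))
  have hd3 : |u.2.2 - v.2.2| ≤ d := by
    rw [hd, Prod.dist_eq, Prod.dist_eq]
    refine le_trans (le_of_eq (Real.dist_eq _ _).symm) (le_trans (le_max_right _ _) (le_max_right _ _))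
  have hd0 : 0 ≤ d := dist_nonneg
  have c1 : |cl R u.1 - cl R v.1| ≤ d := (abs_cl_sub_le R _ _).trans hd1
  have c2 : |cl R u.2.1 - cl R v.2.1| ≤ d := (abs_cl_sub_le R _ _).trans hd2
  have c3 : |cl R u.2.2 - cl R v.2.2| ≤ d := (abs_cl_sub_le R _ _).trans hd3
  set p := cl R u.1; set q := cl R u.2.1; set r := cl R u.2.2
  set p' := cl R v.1; set q' := cl R v.2.1; set r' := cl R v.2.2
  have hp := abs_cl_le R u.1 hR
  have hq := abs_cl_le R u.2.1 hR
  have hr := abs_cl_le R u.2.2 hR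
  have hp' := abs_cl_le R v.1 hR
  have hq' := abs_cl_le R v.2.1 hR
  have hr' := abs_cl_le R v.2.2 hR
  have m1 : |p * (r - r')| ≤ R * d := abs_mul_le hp c3
  have m2 : |r' * (p - p')| ≤ R * d := abs_mul_le hr' c1
  have m3 : |p * (q - q')| ≤ R * d := abs_mul_le hp c2
  have m4 : |q' * (p - p')| ≤ R * d := abs_mul_le hq' c1
  obtain ⟨e1, e2⟩ := abs_le.mp c1
  obtain ⟨e3, e4⟩ := abs_le.mp c2
  obtain ⟨e5, e6⟩ := abs_le.mp c3
  obtain ⟨f1, f2⟩ := abs_le.mp m1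
  obtain ⟨f3, f4⟩ := abs_le.mp m2
  obtain ⟨f5, f6⟩ := abs_le.mp m3
  obtain ⟨f7, f8⟩ := abs_le.mp m4
  have hRd : 0 ≤ R * d := mul_nonneg hR hd0
  simp only [G, F, Prod.dist_eq, Real.dist_eq]
  refine max_le (abs_le.mpr ⟨by nlinarith, by nlinarith⟩)
    (max_le (abs_le.mpr ⟨by nlinarith, by nlinarith⟩) (abs_le.mpr ⟨by nlinarith, by nlinarith⟩))

/-- Lyapunov function -/
noncomputable def V (u : E3) : ℝ := u.1 ^ 2 + u.2.1 ^ 2 + (u.2.2 - 38) ^ 2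

/-- derivative of V in direction w -/
noncomputable def Vd (u w : E3) : ℝ :=
  2 * u.1 * w.1 + 2 * u.2.1 * w.2.1 + 2 * (u.2.2 - 38) * w.2.2

lemma V_nonneg (u : E3) : 0 ≤ V u := by
  unfold V; positivity

/-- key cancellation: along the true field, |V'| grows at most linearly in V -/
lemma Vd_F_le (u : E3) : Vd u (F u) ≤ 20 * V u + 100000 := by
  simp only [Vd, F, V]
  nlinarith [sq_nonneg u.1, sq_nonneg u.2.1, sq_nonneg (u.2.2 - 38), sq_nonneg (u.2.2 + 2)]

lemma Vd_negF_le (u : E3) : Vd u (-(F u)) ≤ 20 * V u + 100000 := by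
  simp only [Vd, F, V, Prod.fst_neg, Prod.snd_neg]
  nlinarith [sq_nonneg u.1, sq_nonneg u.2.1, sq_nonneg (u.2.2 - 38), sq_nonneg (u.2.2 - 60),
    sq_nonneg (u.1 - u.2.1), sq_nonneg (u.1 + u.2.1)]


lemma continuous_V : Continuous V := by unfold V; fun_prop

lemma comp1 {h : ℝ → E3} {p : E3} {s : Set ℝ} {t : ℝ} (H : HasDerivWithinAt h p s t) :
    HasDerivWithinAt (fun s => (h s).1) p.1 s t :=
  (ContinuousLinearMap.fst ℝ ℝ (ℝ × ℝ)).hasFDerivAt.comp_hasDerivWithinAt t H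

lemma comp2 {h : ℝ → E3} {p : E3} {s : Set ℝ} {t : ℝ} (H : HasDerivWithinAt h p s t) :
    HasDerivWithinAt (fun s => (h s).2.1) p.2.1 s t :=
  (ContinuousLinearMap.fst ℝ ℝ ℝ).hasFDerivAt.comp_hasDerivWithinAt t
    ((ContinuousLinearMap.snd ℝ ℝ (ℝ × ℝ)).hasFDerivAt.comp_hasDerivWithinAt t H)

lemma comp3 {h : ℝ → E3} {p : E3} {s : Set ℝ} {t : ℝ} (H : HasDerivWithinAt h p s t) :
    HasDerivWithinAt (fun s => (h s).2.2) p.2.2 s t :=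
  (ContinuousLinearMap.snd ℝ ℝ ℝ).hasFDerivAt.comp_hasDerivWithinAt t
    ((ContinuousLinearMap.snd ℝ ℝ (ℝ × ℝ)).hasFDerivAt.comp_hasDerivWithinAt t H)

lemma hasDerivWithinAt_V {h : ℝ → E3} {p : E3} {s : Set ℝ} {t : ℝ}
    (H : HasDerivWithinAt h p s t) :
    HasDerivWithinAt (fun s => V (h s)) (Vd (h t) p) s t := by
  have H1 := (comp1 H).fun_pow 2
  have H2 := (comp2 H).fun_pow 2
  have H3 := ((comp3 H).sub_const 38).fun_pow 2
  have := (H1.fun_add H2).fun_add H3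
  exact this.congr_deriv (by simp only [Vd, Nat.reduceSub, pow_one, Nat.cast_ofNat])

/-- barrier argument: a solution of a field `W` satisfying the Lyapunov inequality
(at least on the sublevel set `V ≤ M`) stays in `V ≤ M` on `[0, T]`. -/
lemma stays (W : E3 → E3) (T : ℝ) (hT : 0 < T) (h : ℝ → E3) (M : ℝ)
    (hcont : ContinuousOn h (Icc 0 T))
    (hder : ∀ t ∈ Ico 0 T, HasDerivWithinAt h (W (h t)) (Ici t) t)
    (hM : M = (V (h 0) + 100001) * exp (21 * T))
    (hball : ∀ u, V u ≤ M → Vd u (W u) ≤ 20 * V u + 100000) :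
    ∀ t ∈ Icc 0 T, V (h t) ≤ M := by
  set c := V (h 0) + 100001 with hc
  have hc1 : 100001 ≤ c := by have := V_nonneg (h 0); linarith
  have hc0 : 0 ≤ c := by linarith
  set B : ℝ → ℝ := fun x => c * exp (21 * x) with hB
  set B' : ℝ → ℝ := fun x => 21 * (c * exp (21 * x)) with hB'
  have hBle : ∀ x, x ≤ T → B x ≤ M := by
    intro x hx
    rw [hM, hB]
    have : exp (21 * x) ≤ exp (21 * T) := exp_le_exp.mpr (by linarith)
    exact mul_le_mul_of_nonneg_left this hc0
  have hBd : ∀ x, HasDerivAt B (B' x) x := by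
    intro x
    have : HasDerivAt (fun x : ℝ => c * exp (21 * x)) (c * (exp (21 * x) * (21 * 1))) x :=
      (((hasDerivAt_id x).const_mul 21).exp).const_mul c
    convert this using 1
    simp [hB']
    ring
  have main : ∀ ⦃x⦄, x ∈ Icc 0 T → V (h x) ≤ B x := by
    apply image_le_of_deriv_right_lt_deriv_boundary
      (f := fun t => V (h t)) (f' := fun t => Vd (h t) (W (h t)))
    · exact continuous_V.comp_continuousOn hcont
    · intro x hx
      exact hasDerivWithinAt_V (hder x hx)
    · simp [hB]; linarith
    · exact hBd
    · intro x hx heq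
      have hBx : B x ≤ M := hBle x (le_of_lt hx.2)
      have hVx : V (h x) ≤ M := by rw [heq]; exact hBx
      have h1 := hball (h x) hVx
      have h2 : (100000 : ℝ) < B x := by
        have : (1 : ℝ) ≤ exp (21 * x) := one_le_exp (by linarith [hx.1])
        have : c * 1 ≤ c * exp (21 * x) := mul_le_mul_of_nonneg_left this hc0
        simp only [hB]
        nlinarith
      have hBx' : B' x = 21 * B x := by simp [hB', hB]
      rw [hBx', heq] at *
      linarith
  intro t ht
  exact le_trans (main ht) (hBle t ht.2)


lemma cube_of_V_le {M : ℝ} (u : E3) (hu : V u ≤ M) : ‖u‖ ≤ 39 + Real.sqrt M := by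
  have hM : 0 ≤ M := le_trans (V_nonneg u) hu
  have k : ∀ a : ℝ, a ^ 2 ≤ M → |a| ≤ Real.sqrt M := by
    intro a ha
    rw [← Real.sqrt_sq_eq_abs]
    exact Real.sqrt_le_sqrt ha
  have h1 : |u.1| ≤ Real.sqrt M := k _ (by have := V_nonneg u; simp only [V] at hu ⊢; nlinarith [sq_nonneg u.2.1, sq_nonneg (u.2.2 - 38)])
  have h2 : |u.2.1| ≤ Real.sqrt M := k _ (by simp only [V] at hu; nlinarith [sq_nonneg u.1, sq_nonneg (u.2.2 - 38)])
  have h3 : |u.2.2 - 38| ≤ Real.sqrt M := k _ (by simp only [V] at hu; nlinarith [sq_nonneg u.1, sq_nonneg u.2.1])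
  rw [norm_le_iff]
  have := Real.sqrt_nonneg M
  refine ⟨by linarith, by linarith, ?_⟩
  have : |u.2.2| ≤ |u.2.2 - 38| + 38 := by
    calc |u.2.2| = |(u.2.2 - 38) + 38| := by ring_nf
    _ ≤ |u.2.2 - 38| + |(38:ℝ)| := abs_add_le _ _
    _ = |u.2.2 - 38| + 38 := by norm_num
  linarith

lemma exists_sol (T : ℝ) (hT : 0 < T) (u0 : E3) :
    ∃ f : ℝ → E3, f 0 = u0 ∧ ContinuousOn f (Icc (-T) T) ∧
      ∀ t ∈ Ioo (-T) T, HasDerivAt f (F (f t)) t := by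
  set M := (V u0 + 100001) * exp (21 * T) with hMdef
  set R := 39 + Real.sqrt M with hRdef
  have hR : 0 ≤ R := by have := Real.sqrt_nonneg M; simp [hRdef]; linarith
  have hcube : ∀ u : E3, V u ≤ M → ‖u‖ ≤ R := fun u hu => cube_of_V_le u hu
  set C := 60 * R + 2 * R ^ 2 with hCdef
  have hC : 0 ≤ C := by positivity
  have hpl : IsPicardLindelof (fun _ => G R) (tmin := -T) (tmax := T)
      ⟨0, by constructor <;> linarith⟩ u0 (Real.toNNReal (C * T + 1)) 0 (Real.toNNReal C)
      (Real.toNNReal (60 + 2 * R)) := by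
    apply IsPicardLindelof.of_time_independent
    · exact fun x _ => by rw [Real.coe_toNNReal _ hC]; exact norm_G_le R hR x
    · exact (lipschitz_G R hR).lipschitzOnWith
    · have : max (T - 0) (0 - -T) = T := by simp
      rw [Real.coe_toNNReal _ hC, Real.coe_toNNReal _ (by positivity)]
      simp only [NNReal.coe_zero, sub_zero, zero_sub, neg_neg, max_self]
      linarith
  obtain ⟨f, hf0, hfd⟩ := hpl.exists_eq_forall_mem_Icc_hasDerivWithinAt₀
  replace hf0 : f 0 = u0 := hf0
  have hcont : ContinuousOn f (Icc (-T) T) := fun t ht => (hfd t ht).continuousWithinAt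
  have hD : ∀ t ∈ Ioo (-T) T, HasDerivAt f (G R (f t)) t := by
    intro t ht
    exact (hfd t (Ioo_subset_Icc_self ht)).hasDerivAt (Icc_mem_nhds ht.1 ht.2)
  -- forward barrier
  have Hfwd : ∀ t ∈ Icc 0 T, V (f t) ≤ M := by
    apply stays (G R) T hT f M
    · exact hcont.mono (Icc_subset_Icc (by linarith) le_rfl)
    · intro t ht
      exact (hD t ⟨by linarith [ht.1], ht.2⟩).hasDerivWithinAt
    · rw [hf0]
    · intro u hu
      rw [G_eq R u (hcube u hu)]
      exact Vd_F_le u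
  -- backward barrier
  have Hbwd : ∀ t ∈ Icc 0 T, V (f (-t)) ≤ M := by
    apply stays (fun u => -(G R u)) T hT (fun s => f (-s)) M
    · apply hcont.comp continuous_neg.continuousOn
      intro s hs
      constructor <;> simp <;> linarith [hs.1, hs.2]
    · intro t ht
      have hmem : -t ∈ Ioo (-T) T := ⟨by linarith [ht.2], by linarith [ht.1]⟩
      have := (hD (-t) hmem).scomp t (hasDerivAt_neg t)
      simp only [neg_one_smul] at this
      exact this.hasDerivWithinAt
    · simp only [neg_zero, hf0]; exact hMdef
    · intro u hu
      rw [G_eq R u (hcube u hu)]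
      exact Vd_negF_le u
  have hV : ∀ t ∈ Icc (-T) T, V (f t) ≤ M := by
    intro t ht
    rcases le_total 0 t with h | h
    · exact Hfwd t ⟨h, ht.2⟩
    · have := Hbwd (-t) ⟨by linarith, by linarith [ht.1]⟩
      simpa using this
  refine ⟨f, hf0, hcont, fun t ht => ?_⟩
  have := hD t ht
  rwa [G_eq R (f t) (hcube _ (hV t (Ioo_subset_Icc_self ht)))] at this


lemma lipOnF (R' : ℝ) (hR' : 0 ≤ R') :
    LipschitzOnWith (Real.toNNReal (60 + 2 * R')) F (Metric.closedBall (0 : E3) R') := by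
  intro x hx y hy
  have hx' : ‖x‖ ≤ R' := by rwa [← mem_closedBall_zero_iff]
  have hy' : ‖y‖ ≤ R' := by rwa [← mem_closedBall_zero_iff]
  have := lipschitz_G R' hR' x y
  rwa [G_eq R' x hx', G_eq R' y hy'] at this

lemma unique (T : ℝ) (hT : 0 < T) (f g : ℝ → E3) (h0 : f 0 = g 0)
    (hfc : ContinuousOn f (Icc (-T) T))
    (hfd : ∀ t ∈ Ioo (-T) T, HasDerivAt f (F (f t)) t)
    (hgc : ContinuousOn g (Icc (-T) T))
    (hgd : ∀ t ∈ Ioo (-T) T, HasDerivAt g (F (g t)) t) :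
    EqOn f g (Icc (-T) T) := by
  obtain ⟨C1, hC1⟩ := (isCompact_Icc (a := -T) (b := T)).exists_bound_of_continuousOn hfc
  obtain ⟨C2, hC2⟩ := (isCompact_Icc (a := -T) (b := T)).exists_bound_of_continuousOn hgc
  set R' := max C1 C2 with hR'def
  have h0T : (0 : ℝ) ∈ Icc (-T) T := ⟨by linarith, by linarith⟩
  have hR' : 0 ≤ R' := le_trans (norm_nonneg (f 0)) (le_trans (hC1 0 h0T) (le_max_left _ _))
  apply ODE_solution_unique_of_mem_Icc (v := fun _ => F)
    (s := fun _ => Metric.closedBall (0 : E3) R') (fun _ _ => lipOnF R' hR')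
    (⟨neg_lt_zero.mpr hT, hT⟩ : (0:ℝ) ∈ Ioo (-T) T) hfc hfd ?_ hgc hgd ?_ h0
  · intro t ht
    rw [mem_closedBall_zero_iff]
    exact le_trans (hC1 t (Ioo_subset_Icc_self ht)) (le_max_left _ _)
  · intro t ht
    rw [mem_closedBall_zero_iff]
    exact le_trans (hC2 t (Ioo_subset_Icc_self ht)) (le_max_right _ _)

lemma compA1 {h : ℝ → E3} {p : E3} {t : ℝ} (H : HasDerivAt h p t) :
    HasDerivAt (fun s => (h s).1) p.1 t :=
  (ContinuousLinearMap.fst ℝ ℝ (ℝ × ℝ)).hasFDerivAt.comp_hasDerivAt t H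

lemma compA2 {h : ℝ → E3} {p : E3} {t : ℝ} (H : HasDerivAt h p t) :
    HasDerivAt (fun s => (h s).2.1) p.2.1 t :=
  (ContinuousLinearMap.fst ℝ ℝ ℝ).hasFDerivAt.comp_hasDerivAt t
    ((ContinuousLinearMap.snd ℝ ℝ (ℝ × ℝ)).hasFDerivAt.comp_hasDerivAt t H)

lemma compA3 {h : ℝ → E3} {p : E3} {t : ℝ} (H : HasDerivAt h p t) :
    HasDerivAt (fun s => (h s).2.2) p.2.2 t :=
  (ContinuousLinearMap.snd ℝ ℝ ℝ).hasFDerivAt.comp_hasDerivAt t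
    ((ContinuousLinearMap.snd ℝ ℝ (ℝ × ℝ)).hasFDerivAt.comp_hasDerivAt t H)

/-- global solution -/
lemma global_sol (u0 : E3) :
    ∃ u : ℝ → E3, u 0 = u0 ∧ ∀ t : ℝ, HasDerivAt u (F (u t)) t := by
  choose f hf0 hfc hfd using fun n : ℕ => exists_sol ((n : ℝ) + 1) (by positivity) u0
  have agree : ∀ m n : ℕ, m ≤ n → EqOn (f m) (f n) (Icc (-((m:ℝ)+1)) ((m:ℝ)+1)) := by
    intro m n hmn
    have hsub : Icc (-((m:ℝ)+1)) ((m:ℝ)+1) ⊆ Icc (-((n:ℝ)+1)) ((n:ℝ)+1) := by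
      apply Icc_subset_Icc <;> · simp only [neg_le_neg_iff, add_le_add_iff_right]; exact_mod_cast hmn
    have hsub' : Ioo (-((m:ℝ)+1)) ((m:ℝ)+1) ⊆ Ioo (-((n:ℝ)+1)) ((n:ℝ)+1) := by
      apply Ioo_subset_Ioo <;> · simp only [neg_le_neg_iff, add_le_add_iff_right]; exact_mod_cast hmn
    exact unique ((m:ℝ)+1) (by positivity) (f m) (f n) (by rw [hf0, hf0])
      (hfc m) (hfd m) ((hfc n).mono hsub) (fun t ht => hfd n t (hsub' ht))
  have agree' : ∀ (m n : ℕ) (t : ℝ), |t| ≤ (m:ℝ) → |t| ≤ (n:ℝ) → f m t = f n t := by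
    intro m n t hm hn
    rcases le_total m n with h | h
    · exact agree m n h ⟨by rw [abs_le] at hm; linarith [hm.1], by rw [abs_le] at hm; linarith [hm.2]⟩
    · exact (agree n m h ⟨by rw [abs_le] at hn; linarith [hn.1], by rw [abs_le] at hn; linarith [hn.2]⟩).symm
  set u : ℝ → E3 := fun t => f ⌈|t|⌉₊ t with hu
  have key : ∀ (n : ℕ) (t : ℝ), |t| ≤ (n:ℝ) → u t = f n t := by
    intro n t ht
    exact agree' ⌈|t|⌉₊ n t (Nat.le_ceil _) ht
  have hu0 : u 0 = u0 := by
    have := key 0 0 (by simp)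
    rw [this, hf0]
  refine ⟨u, hu0, fun t => ?_⟩
  set n := ⌈|t|⌉₊ + 1 with hn
  have htn : |t| < (n : ℝ) := by
    push_cast [hn]
    calc |t| ≤ (⌈|t|⌉₊ : ℝ) := Nat.le_ceil _
    _ < (⌈|t|⌉₊ : ℝ) + 1 := by linarith
  have hmem : t ∈ Ioo (-((n:ℝ)+1)) ((n:ℝ)+1) := by
    rw [abs_lt] at htn
    exact ⟨by linarith [htn.1], by linarith [htn.2]⟩
  have hD := hfd n t hmem
  have hEq : u =ᶠ[nhds t] f n := by
    have hopen : IsOpen {s : ℝ | |s| < (n:ℝ)} := isOpen_lt (continuous_abs) continuous_const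
    filter_upwards [hopen.mem_nhds htn] with s hs
    exact key n s (le_of_lt hs)
  have := hD.congr_of_eventuallyEq hEq
  rwa [← key n t (le_of_lt htn)] at this

end LorenzAux

/-- For every real initial condition `(x₀, y₀, z₀)` there is a global-in-time
real solution of the Lorenz system with that initial value; in particular real solutions
have no singularity at any finite real time. -/
theorem lorenz_global_real_solution (x₀ y₀ z₀ : ℝ) :
    ∃ x y z : ℝ → ℝ,
      (∀ t : ℝ,
        HasDerivAt x (10 * (y t - x t)) t ∧
        HasDerivAt y (28 * x t - y t - x t * z t) t ∧
        HasDerivAt z (-(8 / 3) * z t + x t * y t) t) ∧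
      x 0 = x₀ ∧ y 0 = y₀ ∧ z 0 = z₀ := by
  obtain ⟨u, hu0, hud⟩ := LorenzAux.global_sol (x₀, y₀, z₀)
  refine ⟨fun t => (u t).1, fun t => (u t).2.1, fun t => (u t).2.2, fun t => ?_,
    by simp only [hu0], by simp only [hu0], by simp only [hu0]⟩
  have h := hud t
  exact ⟨LorenzAux.compA1 h, LorenzAux.compA2 h, LorenzAux.compA3 h⟩
end

section
/- Let P, Q, R ∈ ℂ[η] be polynomials satisfying the differential system P' = 10(Q − 2i), Q' = Q − 2i R + P/5 + i/5, R' = R + 2i Q − (i/5) P + 8/15, where ' denotes the derivative with respect to η. Then P, Q, R are the constant polynomials P = 71i/9, Q = 2i, R = 17/9, and in particular this constant triple satisfies the system. -/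
open Polynomial Complex

/-- If polynomials `P, Q, R ∈ ℂ[η]` satisfy
`P' = 10(Q − 2i)`, `Q' = Q − 2i R + P/5 + i/5`, `R' = R + 2i Q − (i/5) P + 8/15`,
then `P = 71i/9`, `Q = 2i`, `R = 17/9` (constant polynomials); in particular this
constant triple satisfies the system. -/
theorem lorenz_next_coefficients (P Q R : ℂ[X])
    (hP : derivative P = 10 * (Q - C (2 * I)))
    (hQ : derivative Q = Q - C (2 * I) * R + C (1 / 5) * P + C (I / 5))
    (hR : derivative R = R + C (2 * I) * Q - C (I / 5) * P + C (8 / 15)) :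
    (P = C (71 * I / 9) ∧ Q = C (2 * I) ∧ R = C (17 / 9)) ∧
      (derivative (C (71 * I / 9) : ℂ[X]) = 10 * (C (2 * I) - C (2 * I)) ∧
       derivative (C (2 * I) : ℂ[X]) =
         C (2 * I) - C (2 * I) * C (17 / 9) + C (1 / 5) * C (71 * I / 9) + C (I / 5) ∧
       derivative (C (17 / 9) : ℂ[X]) =
         C (17 / 9) + C (2 * I) * C (2 * I) - C (I / 5) * C (71 * I / 9) + C (8 / 15)) := by
  have h10 : (10 : ℂ[X]) = C (10 : ℂ) := (map_ofNat C 10).symm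
  rw [h10] at hP
  set n := max P.natDegree (max Q.natDegree R.natDegree) with hn
  have hPn : P.natDegree ≤ n := le_max_left _ _
  have hQn : Q.natDegree ≤ n := le_trans (le_max_left _ _) (le_max_right _ _)
  have hRn : R.natDegree ≤ n := le_trans (le_max_right _ _) (le_max_right _ _)
  have hzero : n = 0 := by
    by_contra h1
    have cP : (derivative P).coeff n = 0 := by
      rw [coeff_derivative, coeff_eq_zero_of_natDegree_lt (by omega)]; ring
    have cQ : (derivative Q).coeff n = 0 := by
      rw [coeff_derivative, coeff_eq_zero_of_natDegree_lt (by omega)]; ring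
    have cR : (derivative R).coeff n = 0 := by
      rw [coeff_derivative, coeff_eq_zero_of_natDegree_lt (by omega)]; ring
    have eP := congrArg (fun p : ℂ[X] => p.coeff n) hP
    have eQ := congrArg (fun p : ℂ[X] => p.coeff n) hQ
    have eR := congrArg (fun p : ℂ[X] => p.coeff n) hR
    simp only [coeff_C_mul, coeff_sub, coeff_add, coeff_C, if_neg h1, cP, cQ, cR] at eP eQ eR
    have hq0 : Q.coeff n = 0 := by linear_combination -eP / 10
    rw [hq0] at eQ eR
    have hp0 : P.coeff n = 0 := by
      linear_combination (-5/3 : ℂ) * eQ - (10/3 : ℂ) * I * eR +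
        ((2/3 : ℂ) * P.coeff n) * Complex.I_sq
    rw [hp0] at eR
    have hr0 : R.coeff n = 0 := by linear_combination -eR
    have hcase : P.natDegree = n ∨ Q.natDegree = n ∨ R.natDegree = n := by omega
    rcases hcase with hc | hc | hc
    · have hne : P ≠ 0 := fun h0 => h1 (by rw [← hc, h0, natDegree_zero])
      exact leadingCoeff_ne_zero.mpr hne (by rw [leadingCoeff, hc]; exact hp0)
    · have hne : Q ≠ 0 := fun h0 => h1 (by rw [← hc, h0, natDegree_zero])
      exact leadingCoeff_ne_zero.mpr hne (by rw [leadingCoeff, hc]; exact hq0)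
    · have hne : R ≠ 0 := fun h0 => h1 (by rw [← hc, h0, natDegree_zero])
      exact leadingCoeff_ne_zero.mpr hne (by rw [leadingCoeff, hc]; exact hr0)
  have hPc : P = C (P.coeff 0) := eq_C_of_natDegree_le_zero (by omega)
  have hQc : Q = C (Q.coeff 0) := eq_C_of_natDegree_le_zero (by omega)
  have hRc : R = C (R.coeff 0) := eq_C_of_natDegree_le_zero (by omega)
  set p := P.coeff 0
  set q := Q.coeff 0
  set r := R.coeff 0
  simp only [hPc, hQc, hRc, derivative_C] at hP hQ hR
  simp only [← C_mul, ← C_sub, ← C_add, ← C_0] at hP hQ hR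
  have eP := C_injective hP
  have eQ := C_injective hQ
  have eR := C_injective hR
  have hq : q = 2 * I := by linear_combination -eP / 10
  rw [hq] at eQ eR
  have hp : p = 71 * I / 9 := by
    linear_combination (-5/3 : ℂ) * eQ - (10/3 : ℂ) * I * eR +
      ((2/3 : ℂ) * p - 40/3 * I) * Complex.I_sq
  rw [hp] at eR
  have hr : r = 17 / 9 := by
    linear_combination -eR + (-109/45 : ℂ) * Complex.I_sq
  refine ⟨⟨by rw [hPc, hp], by rw [hQc, hq], by rw [hRc, hr]⟩, ?_, ?_, ?_⟩
  · simp
  · rw [derivative_C]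
    simp only [← C_mul, ← C_sub, ← C_add, ← C_0]
    congr 1
    ring
  · rw [derivative_C]
    simp only [← C_mul, ← C_sub, ← C_add, ← C_0]
    congr 1
    linear_combination (71/45 - 4 : ℂ) * Complex.I_sq
end

section
/- For every m ∈ ℕ (or more generally every m ∈ ℂ), the characteristic polynomial of the matrix A_m factors as (X − (−m + 2)) · (X − (−m)) · (X − (−m − 3)); that is, the eigenvalues of A_m are −m + 2, −m, and −m − 3. -/
open Polynomial Complex

/-- For every `m ∈ ℂ` (so in particular for every `m ∈ ℕ`), the characteristic
polynomial of the matrix `A_m`, whose rows are `(−m−1, 10, 0)`, `(1/5, −m, −2i)`,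
`(−i/5, 2i, −m)`, factors as `(X − (−m+2))(X − (−m))(X − (−m−3))`; that is, its
eigenvalues are `−m + 2`, `−m`, `−m − 3`. -/
theorem lorenz_recursion_matrix_eigenvalues (m : ℂ) :
    Matrix.charpoly
        !![-m - 1, 10, 0;
           1 / 5, -m, -(2 * I);
           -(I / 5), 2 * I, -m] =
      (X - C (-m + 2)) * (X - C (-m)) * (X - C (-m - 3)) := by
  rw [Matrix.charpoly, Matrix.det_fin_three]
  simp [Matrix.charmatrix_apply, Matrix.one_apply]
  simp only [div_eq_mul_inv, C_mul, map_inv₀, map_ofNat, map_one, map_neg, map_sub, map_add]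
  have hI : (C I : ℂ[X])^2 = -1 := by
    rw [sq, ← C_mul, I_mul_I]; simp
  have h5 : (C ((5:ℂ)⁻¹)) * 5 = 1 := by
    rw [show (5:ℂ[X]) = C 5 from (map_ofNat (C : ℂ →+* ℂ[X]) 5).symm, ← C_mul]
    norm_num
  linear_combination (4 * X + 4 * C m + 8 - 4 * (C I)^2 * C ((5:ℂ)⁻¹)
      + 4 * C ((5:ℂ)⁻¹) * ((C I)^2 - 10)) * hI +
    (-2 * X - 2 * C m + 4 * (C I)^2 + 8) * h5
end

section
/- Let α ∈ ℂ with |α| > 1 and let f ∈ ℂ[η] be a polynomial of degree n. Let ξ ∈ ℂ[η] be a polynomial solution of the differential equation dξ/dη = α ξ + f(η). If a > 1 is a real number such that |α| ≥ a(n + 1/2), then |ξ| ≤ (1/|α|) · (a/(a−1)) · |f|. -/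
open Polynomial

/-- For a polynomial `p ∈ ℂ[η]`, `psiNorm p` is the sum of the absolute values of its
coefficients. -/
noncomputable def psiNorm (p : Polynomial ℂ) : ℝ :=
  ∑ i ∈ Finset.range (p.natDegree + 1), ‖p.coeff i‖

/-- Let `|α| > 1`, let `f ∈ ℂ[η]` have degree `n`, and let `ξ` be a polynomial
solution of `ξ' = α ξ + f`.  If `a > 1` and `|α| ≥ a(n + 1/2)`, then
`|ξ| ≤ (1/|α|) (a/(a−1)) |f|`. -/
theorem polynomial_ode_norm_bound (α : ℂ) (hα : 1 < ‖α‖)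
    (n : ℕ) (f : ℂ[X]) (hf : f.natDegree = n)
    (ξ : ℂ[X]) (hξ : derivative ξ = C α * ξ + f)
    (a : ℝ) (ha : 1 < a) (haα : a * (n + 1 / 2) ≤ ‖α‖) :
    psiNorm ξ ≤ 1 / ‖α‖ * (a / (a - 1)) * psiNorm f := by
  have hA0 : (0:ℝ) < ‖α‖ := lt_trans one_pos hα
  have hαne : α ≠ 0 := by
    intro h; rw [h] at hα; simp at hα; linarith
  have hcoef : ∀ k : ℕ, ξ.coeff (k+1) * ((k:ℂ)+1) = α * ξ.coeff k + f.coeff k := by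
    intro k
    have := congrArg (fun p => Polynomial.coeff p k) hξ
    simpa [Polynomial.coeff_derivative, Polynomial.coeff_C_mul] using this
  -- natDegree ξ ≤ n
  have hdeg : ξ.natDegree ≤ n := by
    by_contra h
    push_neg at h
    have hξ0 : ξ ≠ 0 := by
      intro h0; rw [h0] at h; simp at h
    have h1 : ξ.coeff (ξ.natDegree + 1) = 0 :=
      Polynomial.coeff_eq_zero_of_natDegree_lt (by omega)
    have h2 : f.coeff ξ.natDegree = 0 :=
      Polynomial.coeff_eq_zero_of_natDegree_lt (by omega)
    have h3 := hcoef ξ.natDegree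
    rw [h1, h2] at h3
    have h4 : α * ξ.coeff ξ.natDegree = 0 := by
      simpa using h3.symm
    rcases mul_eq_zero.mp h4 with h5 | h5
    · exact hαne h5
    · exact (Polynomial.leadingCoeff_ne_zero.mpr hξ0) h5
  set g : ℕ → ℝ := fun j => ‖ξ.coeff j‖ with hg
  have hgn1 : g (n+1) = 0 := by
    simp [hg, Polynomial.coeff_eq_zero_of_natDegree_lt (by omega : ξ.natDegree < n+1)]
  set T : ℝ := ∑ j ∈ Finset.range (n+1), g j with hT
  set F : ℝ := ∑ j ∈ Finset.range (n+1), ‖f.coeff j‖ with hF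
  have hT0 : 0 ≤ T := Finset.sum_nonneg fun i _ => norm_nonneg _
  have hF0 : 0 ≤ F := Finset.sum_nonneg fun i _ => norm_nonneg _
  have hpsiξ : psiNorm ξ = T := by
    rw [hT, psiNorm]
    apply Finset.sum_subset
    · exact Finset.range_subset_range.mpr (by omega)
    · intro i _ hi
      simp only [Finset.mem_range, not_lt] at hi
      simp [hg, Polynomial.coeff_eq_zero_of_natDegree_lt (by omega : ξ.natDegree < i)]
  have hpsif : psiNorm f = F := by rw [hF, psiNorm, hf]
  have hshift : ∑ k ∈ Finset.range (n+1), g (k+1) ≤ T := by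
    have h1 : ∑ k ∈ Finset.range (n+2), g k = (∑ k ∈ Finset.range (n+1), g (k+1)) + g 0 :=
      Finset.sum_range_succ' g (n+1)
    have h2 : ∑ k ∈ Finset.range (n+2), g k = T + g (n+1) := Finset.sum_range_succ g (n+1)
    have h3 : 0 ≤ g 0 := norm_nonneg _
    linarith
  have key : ‖α‖ * T ≤ (n:ℝ) * T + F := by
    have h1 : ‖α‖ * T = ∑ k ∈ Finset.range (n+1), ‖α * ξ.coeff k‖ := by
      rw [hT, Finset.mul_sum]
      exact Finset.sum_congr rfl fun k _ => (norm_mul α _).symm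
    have h2 : ∀ k ∈ Finset.range (n+1),
        ‖α * ξ.coeff k‖ ≤ (n:ℝ) * g (k+1) + ‖f.coeff k‖ := by
      intro k hk
      have hk' : k < n + 1 := Finset.mem_range.mp hk
      have heq : α * ξ.coeff k = ξ.coeff (k+1) * ((k:ℂ)+1) - f.coeff k := by
        rw [hcoef k]; ring
      rw [heq]
      have hb1 : ‖ξ.coeff (k+1) * ((k:ℂ)+1) - f.coeff k‖
          ≤ ‖ξ.coeff (k+1) * ((k:ℂ)+1)‖ + ‖f.coeff k‖ :=
        norm_sub_le _ _
      have hb2 : ‖ξ.coeff (k+1) * ((k:ℂ)+1)‖ = g (k+1) * ((k:ℝ)+1) := by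
        rw [norm_mul]
        congr 1
        rw [show ((k:ℂ)+1) = ((k+1 : ℕ) : ℂ) by push_cast; ring, Complex.norm_natCast]
        push_cast; ring
      have hb3 : g (k+1) * ((k:ℝ)+1) ≤ (n:ℝ) * g (k+1) := by
        rcases Nat.lt_or_ge k n with hkn | hkn
        · have : (k:ℝ) + 1 ≤ (n:ℝ) := by exact_mod_cast hkn
          nlinarith [norm_nonneg (ξ.coeff (k+1))]
        · have : k = n := by omega
          subst this
          simp [hgn1]
      linarith
    calc ‖α‖ * T = ∑ k ∈ Finset.range (n+1), ‖α * ξ.coeff k‖ := h1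
      _ ≤ ∑ k ∈ Finset.range (n+1), ((n:ℝ) * g (k+1) + ‖f.coeff k‖) :=
          Finset.sum_le_sum h2
      _ = (n:ℝ) * (∑ k ∈ Finset.range (n+1), g (k+1)) + F := by
          rw [Finset.sum_add_distrib, Finset.mul_sum]
      _ ≤ (n:ℝ) * T + F := by
          have := mul_le_mul_of_nonneg_left hshift (Nat.cast_nonneg n : (0:ℝ) ≤ n)
          linarith
  rw [hpsiξ, hpsif]
  have ha1 : (0:ℝ) < a - 1 := by linarith
  have han : a * (n:ℝ) ≤ ‖α‖ := by nlinarith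
  rw [show 1 / ‖α‖ * (a / (a - 1)) * F = a * F / ((a - 1) * ‖α‖) by
    field_simp]
  rw [le_div_iff₀ (by positivity)]
  have h5 : a * (‖α‖ * T) ≤ a * ((n:ℝ) * T + F) :=
    mul_le_mul_of_nonneg_left key (by linarith)
  have h6 : a * (n:ℝ) * T ≤ ‖α‖ * T := mul_le_mul_of_nonneg_right han hT0
  nlinarith
end

section
/- Let m ≥ 8 be a natural number, and let F = (F₁, F₂, F₃) be a triple of polynomials in ℂ[η] each of degree at most ⌊(m+2)/2⌋. Let X = (X₁, X₂, X₃) be a triple of polynomials satisfying the linear system X' = A_m X + F (componentwise, with formal polynomial derivatives). Then max(|X₁|, |X₂|, |X₃|) ≤ 192 · max(|F₁|, |F₂|, |F₃|) / (m − 2). -/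
open Polynomial Complex

lemma geom_bound : ∀ n : ℕ, ∑ j ∈ Finset.range n, (13/15:ℝ)^j ≤ 15/2 := by
  intro n
  induction n with
  | zero => simp; norm_num
  | succ n ih =>
    rw [Finset.sum_range_succ']
    have : ∑ j ∈ Finset.range n, (13/15:ℝ)^(j+1) = (13/15) * ∑ j ∈ Finset.range n, (13/15:ℝ)^j := by
      rw [Finset.mul_sum]; exact Finset.sum_congr rfl (fun j _ => by ring)
    rw [this]
    norm_num
    nlinarith [ih]

lemma aux_sum (N : ℕ) (β : ℝ) (hβ : 0 ≤ β) (n φ : ℕ → ℝ)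
    (hn : ∀ k, 0 ≤ n k) (hφ : ∀ k, 0 ≤ φ k)
    (hrec : ∀ k, n k ≤ β * (((k:ℝ)+1) * n (k+1) + φ k))
    (hvan : ∀ k, N < k → n k = 0)
    (hb1 : β * (N:ℝ) ≤ 13/12) (hb2 : β * ((N:ℝ)-1) ≤ 13/15) :
    ∑ k ∈ Finset.range (N+1), n k ≤ β * (73/8) * ∑ l ∈ Finset.range (N+1), φ l := by
  set c : ℕ → ℝ := fun k => β * ∑ l ∈ Finset.Icc k N, φ l * (β^(l-k) * ((l.descFactorial (l-k) : ℕ) : ℝ)) with hc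
  have hcnn : ∀ k, 0 ≤ c k := by
    intro k
    refine mul_nonneg hβ (Finset.sum_nonneg fun l _ => mul_nonneg (hφ l) (mul_nonneg (pow_nonneg hβ _) (by positivity)))
  have hrecc : ∀ k, k ≤ N → c k = β * (φ k + ((k:ℝ)+1) * c (k+1)) := by
    intro k hk
    have hins : Finset.Icc k N = insert k (Finset.Icc (k+1) N) := by
      ext a; simp only [Finset.mem_Icc, Finset.mem_insert]; omega
    have hnotmem : k ∉ Finset.Icc (k+1) N := by simp
    have hsum : ∑ l ∈ Finset.Icc (k+1) N, φ l * (β^(l-k) * ((l.descFactorial (l-k) : ℕ) : ℝ))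
        = ((k:ℝ)+1) * β * ∑ l ∈ Finset.Icc (k+1) N, φ l * (β^(l-(k+1)) * ((l.descFactorial (l-(k+1)) : ℕ) : ℝ)) := by
      rw [Finset.mul_sum]
      refine Finset.sum_congr rfl fun l hl => ?_
      have hkl : k + 1 ≤ l := (Finset.mem_Icc.mp hl).1
      have h1 : l - k = (l - (k+1)) + 1 := by omega
      have h2 : l.descFactorial ((l - (k+1)) + 1) = (k+1) * l.descFactorial (l - (k+1)) := by
        rw [Nat.descFactorial_succ]
        congr 1
        omega
      rw [h1, h2, pow_succ]
      push_cast
      ring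
    rw [hc]
    simp only
    rw [hins, Finset.sum_insert hnotmem, hsum]
    simp only [Nat.sub_self, pow_zero, Nat.descFactorial_zero, Nat.cast_one, mul_one]
    ring
  -- n k ≤ c k
  have hnc : ∀ j k, N + 1 ≤ k + j → n k ≤ c k := by
    intro j
    induction j with
    | zero => intro k hk; rw [hvan k (by omega)]; exact hcnn k
    | succ j ih =>
      intro k hk
      by_cases hkN : N < k
      · rw [hvan k hkN]; exact hcnn k
      · push_neg at hkN
        have h1 := hrec k
        have h2 := ih (k+1) (by omega)
        have h3 := hrecc k hkN
        have hk1 : (0:ℝ) ≤ (k:ℝ)+1 := by positivity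
        calc n k ≤ β * (((k:ℝ)+1) * n (k+1) + φ k) := h1
          _ ≤ β * (((k:ℝ)+1) * c (k+1) + φ k) := by
              apply mul_le_mul_of_nonneg_left _ hβ
              have := mul_le_mul_of_nonneg_left h2 hk1
              linarith
          _ = c k := by rw [h3]; ring
  have hnc' : ∀ k, n k ≤ c k := fun k => hnc (N+1) k (by omega)
  -- sum exchange
  have hex : ∑ k ∈ Finset.range (N+1), c k =
      β * ∑ l ∈ Finset.range (N+1), φ l * ∑ k ∈ Finset.range (l+1), β^(l-k) * ((l.descFactorial (l-k) : ℕ) : ℝ) := by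
    rw [hc]
    simp only
    rw [← Finset.mul_sum]
    congr 1
    rw [Finset.sum_comm' (s := Finset.range (N+1)) (t := fun k => Finset.Icc k N)
      (t' := Finset.range (N+1)) (s' := fun l => Finset.range (l+1))]
    · exact Finset.sum_congr rfl fun l _ => by rw [Finset.mul_sum]
    · intro k l; simp only [Finset.mem_range, Finset.mem_Icc]; omega
  -- D_l bound
  have hD : ∀ l, l ≤ N → ∑ k ∈ Finset.range (l+1), β^(l-k) * ((l.descFactorial (l-k) : ℕ) : ℝ) ≤ 73/8 := by
    intro l hl
    have hrefl : ∑ k ∈ Finset.range (l+1), β^(l-k) * ((l.descFactorial (l-k) : ℕ) : ℝ)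
        = ∑ j ∈ Finset.range (l+1), β^j * ((l.descFactorial j : ℕ) : ℝ) := by
      rw [← Finset.sum_range_reflect]
      refine Finset.sum_congr rfl fun j hj => ?_
      have hj' : j < l + 1 := Finset.mem_range.mp hj
      have e1 : l - (l + 1 - 1 - j) = j := by omega
      rw [e1]
    rw [hrefl, Finset.sum_range_succ']
    simp only [pow_zero, Nat.descFactorial_zero, Nat.cast_one, mul_one, one_mul]
    have hterm : ∀ j, β^(j+1) * ((l.descFactorial (j+1) : ℕ) : ℝ) ≤ (13/12) * (13/15)^j := by
      intro j
      rcases Nat.eq_zero_or_pos l with hl0 | hl0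
      · subst hl0
        simp [Nat.descFactorial]
        positivity
      · obtain ⟨s, rfl⟩ : ∃ s, l = s + 1 := ⟨l - 1, by omega⟩
        rw [Nat.succ_descFactorial_succ]
        have hd : ((s.descFactorial j : ℕ) : ℝ) ≤ ((s^j : ℕ) : ℝ) := by
          exact_mod_cast Nat.descFactorial_le_pow s j
        have hβs : β * ((s:ℝ)+1) ≤ 13/12 := by
          have : ((s:ℝ)+1) ≤ (N:ℝ) := by exact_mod_cast hl
          nlinarith
        have hβs2 : β * (s:ℝ) ≤ 13/15 := by
          have : (s:ℝ) ≤ (N:ℝ)-1 := by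
            have : (s+1:ℝ) ≤ (N:ℝ) := by exact_mod_cast hl
            linarith
          nlinarith
        have h1 : β^j * ((s.descFactorial j : ℕ) : ℝ) ≤ (13/15)^j := by
          calc β^j * ((s.descFactorial j : ℕ) : ℝ) ≤ β^j * ((s^j : ℕ) : ℝ) := by
                exact mul_le_mul_of_nonneg_left hd (pow_nonneg hβ _)
            _ = (β * (s:ℝ))^j := by push_cast; rw [mul_pow]
            _ ≤ (13/15)^j := by
                exact pow_le_pow_left₀ (mul_nonneg hβ (by positivity)) hβs2 j
        calc β^(j+1) * (((s+1) * s.descFactorial j : ℕ) : ℝ)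
            = (β * ((s:ℝ)+1)) * (β^j * ((s.descFactorial j : ℕ) : ℝ)) := by
              push_cast; ring
          _ ≤ (13/12) * (13/15)^j := by
              apply mul_le_mul hβs h1 (mul_nonneg (pow_nonneg hβ _) (by positivity)) (by norm_num)
    calc ∑ j ∈ Finset.range l, β^(j+1) * ((l.descFactorial (j+1) : ℕ) : ℝ) + 1
        ≤ ∑ j ∈ Finset.range l, (13/12) * (13/15:ℝ)^j + 1 := by
          have := Finset.sum_le_sum (f := fun j => β^(j+1) * ((l.descFactorial (j+1) : ℕ) : ℝ))
            (g := fun j => (13/12) * (13/15:ℝ)^j) (s := Finset.range l) (fun j _ => hterm j)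
          linarith
      _ = (13/12) * ∑ j ∈ Finset.range l, (13/15:ℝ)^j + 1 := by rw [Finset.mul_sum]
      _ ≤ (13/12) * (15/2) + 1 := by
          have := geom_bound l
          nlinarith
      _ = 73/8 := by norm_num
  calc ∑ k ∈ Finset.range (N+1), n k ≤ ∑ k ∈ Finset.range (N+1), c k :=
        Finset.sum_le_sum fun k _ => hnc' k
    _ = β * ∑ l ∈ Finset.range (N+1), φ l * ∑ k ∈ Finset.range (l+1), β^(l-k) * ((l.descFactorial (l-k) : ℕ) : ℝ) := hex
    _ ≤ β * ∑ l ∈ Finset.range (N+1), φ l * (73/8) := by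
        apply mul_le_mul_of_nonneg_left _ hβ
        refine Finset.sum_le_sum fun l hl => ?_
        exact mul_le_mul_of_nonneg_left (hD l (by simpa using Nat.lt_succ_iff.mp (Finset.mem_range.mp hl))) (hφ l)
    _ = β * (73/8) * ∑ l ∈ Finset.range (N+1), φ l := by rw [← Finset.sum_mul]; ring
set_option maxHeartbeats 1000000 in
lemma key_bound (m : ℕ) (hm : 8 ≤ m) (x0 x1 x2 y0 y1 y2 : ℂ) (t : ℝ)
    (e0 : (-(m:ℂ)-1)*x0 + 10*x1 + 0*x2 = y0)
    (e1 : (1/5)*x0 + (-(m:ℂ))*x1 + (-(2*I))*x2 = y1)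
    (e2 : (-(I/5))*x0 + (2*I)*x1 + (-(m:ℂ))*x2 = y2)
    (h0 : ‖y0‖ ≤ t) (h1 : ‖y1‖ ≤ t/2) (h2 : ‖y2‖ ≤ t/4) :
    max (‖x0‖) (max (2 * ‖x1‖) (4 * ‖x2‖)) ≤
      13 / (10*((m:ℝ)-2)) * t := by
  have abs3 : ∀ a b c z0 z1 z2 : ℂ, ‖a*z0 + b*z1 + c*z2‖ ≤
      ‖a‖ * ‖z0‖ + ‖b‖ * ‖z1‖
        + ‖c‖ * ‖z2‖ := by
    intro a b c z0 z1 z2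
    calc ‖a*z0 + b*z1 + c*z2‖ ≤ ‖a*z0 + b*z1‖ + ‖c*z2‖ :=
          norm_add_le _ _
      _ ≤ ‖a*z0‖ + ‖b*z1‖ + ‖c*z2‖ := by
          gcongr; exact norm_add_le _ _
      _ = _ := by simp [norm_mul]
  have hM : (8:ℝ) ≤ (m:ℝ) := by exact_mod_cast hm
  have ht : 0 ≤ t := le_trans (norm_nonneg _) h0
  have hx0 : ((m:ℂ))*((m:ℂ)-2)*((m:ℂ)+3)*x0 = (4-(m:ℂ)^2)*y0 + (-(10*(m:ℂ)))*y1 + (20*I)*y2 := by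
    linear_combination (-((m:ℂ)^2-4)) * e0 + (-(10*(m:ℂ))) * e1 + (20*I) * e2 + (4*x0 - 40*x1) * Complex.I_sq
  have hx1 : ((m:ℂ))*((m:ℂ)-2)*((m:ℂ)+3)*x1 = ((2-(m:ℂ))/5)*y0 + (-((m:ℂ)*((m:ℂ)+1)))*y1 + (2*I*((m:ℂ)+1))*y2 := by
    linear_combination (-(((m:ℂ)-2)/5)) * e0 + (-((m:ℂ)*((m:ℂ)+1))) * e1 + (2*I*((m:ℂ)+1)) * e2 + ((2*((m:ℂ)+1)/5)*x0 - 4*((m:ℂ)+1)*x1) * Complex.I_sq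
  have hx2 : ((m:ℂ))*((m:ℂ)-2)*((m:ℂ)+3)*x2 = (I*((m:ℂ)-2)/5)*y0 + (-(2*I*(m:ℂ)))*y1 + (-(((m:ℂ)+2)*((m:ℂ)-1)))*y2 := by
    linear_combination (I*((m:ℂ)-2)/5) * e0 + (-(2*I*(m:ℂ))) * e1 + (-(((m:ℂ)+2)*((m:ℂ)-1))) * e2 + (-(4*(m:ℂ)*x2)) * Complex.I_sq
  have habs : ∀ z : ℂ, ‖((m:ℂ))*((m:ℂ)-2)*((m:ℂ)+3)*z‖
      = (m:ℝ)*((m:ℝ)-2)*((m:ℝ)+3) * ‖z‖ := by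
    intro z
    have h : ((m:ℂ))*((m:ℂ)-2)*((m:ℂ)+3) = (((m:ℝ)*((m:ℝ)-2)*((m:ℝ)+3) : ℝ) : ℂ) := by push_cast; ring
    rw [norm_mul, h, Complex.norm_real, Real.norm_eq_abs, _root_.abs_of_nonneg (mul_nonneg (mul_nonneg (by linarith) (by linarith)) (by linarith))]
  have hcast : ∀ r : ℝ, 0 ≤ r → ‖((r:ℝ):ℂ)‖ = r := fun r hr => by
    rw [Complex.norm_real, Real.norm_eq_abs, _root_.abs_of_nonneg hr]
  have hcastI : ∀ r : ℝ, 0 ≤ r → ‖I * ((r:ℝ):ℂ)‖ = r := fun r hr => by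
    rw [norm_mul, Complex.norm_I, Complex.norm_real, Real.norm_eq_abs, _root_.abs_of_nonneg hr, one_mul]
  -- component 0
  have b0 : (m:ℝ)*((m:ℝ)-2)*((m:ℝ)+3) * ‖x0‖ ≤
      ((m:ℝ)^2-4)*t + (10*(m:ℝ))*(t/2) + 20*(t/4) := by
    rw [← habs, hx0]
    refine le_trans (abs3 _ _ _ _ _ _) ?_
    have a1 : ‖4-(m:ℂ)^2‖ = (m:ℝ)^2-4 := by
      rw [show (4-(m:ℂ)^2) = ((((m:ℝ)^2-4) : ℝ):ℂ) * (-1 : ℝ) by push_cast; ring]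
      rw [norm_mul, hcast _ (by nlinarith)]
      simp
    have a2 : ‖-(10*(m:ℂ))‖ = 10*(m:ℝ) := by
      rw [show (-(10*(m:ℂ))) = (((10*(m:ℝ)) : ℝ):ℂ) * (-1 : ℝ) by push_cast; ring]
      rw [norm_mul, hcast _ (by nlinarith)]
      simp
    have a3 : ‖(20:ℂ)*I‖ = 20 := by simp [norm_mul]
    rw [a1, a2, a3]
    gcongr <;> nlinarith [norm_nonneg y0, norm_nonneg y1, norm_nonneg y2]
  have b1 : (m:ℝ)*((m:ℝ)-2)*((m:ℝ)+3) * ‖x1‖ ≤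
      (((m:ℝ)-2)/5)*t + ((m:ℝ)*((m:ℝ)+1))*(t/2) + (2*((m:ℝ)+1))*(t/4) := by
    rw [← habs, hx1]
    refine le_trans (abs3 _ _ _ _ _ _) ?_
    have a1 : ‖(2-(m:ℂ))/5‖ = ((m:ℝ)-2)/5 := by
      rw [show ((2-(m:ℂ))/5) = (((((m:ℝ)-2)/5) : ℝ):ℂ) * (-1 : ℝ) by push_cast; ring]
      rw [norm_mul, hcast _ (by nlinarith)]
      simp
    have a2 : ‖-((m:ℂ)*((m:ℂ)+1))‖ = (m:ℝ)*((m:ℝ)+1) := by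
      rw [show (-((m:ℂ)*((m:ℂ)+1))) = ((((m:ℝ)*((m:ℝ)+1)) : ℝ):ℂ) * (-1 : ℝ) by push_cast; ring]
      rw [norm_mul, hcast _ (by nlinarith)]
      simp
    have a3 : ‖2*I*((m:ℂ)+1)‖ = 2*((m:ℝ)+1) := by
      rw [show (2*I*((m:ℂ)+1)) = I * (((2*((m:ℝ)+1)) : ℝ):ℂ) by push_cast; ring]
      exact hcastI _ (by nlinarith)
    rw [a1, a2, a3]
    gcongr <;> nlinarith [norm_nonneg y0, norm_nonneg y1, norm_nonneg y2]
  have b2 : (m:ℝ)*((m:ℝ)-2)*((m:ℝ)+3) * ‖x2‖ ≤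
      (((m:ℝ)-2)/5)*t + (2*(m:ℝ))*(t/2) + (((m:ℝ)+2)*((m:ℝ)-1))*(t/4) := by
    rw [← habs, hx2]
    refine le_trans (abs3 _ _ _ _ _ _) ?_
    have a1 : ‖I*((m:ℂ)-2)/5‖ = ((m:ℝ)-2)/5 := by
      rw [show (I*((m:ℂ)-2)/5) = I * (((((m:ℝ)-2)/5) : ℝ):ℂ) by push_cast; ring]
      exact hcastI _ (by nlinarith)
    have a2 : ‖-(2*I*(m:ℂ))‖ = 2*(m:ℝ) := by
      rw [show (-(2*I*(m:ℂ))) = I * (((2*(m:ℝ)) : ℝ):ℂ) * (-1 : ℝ) by push_cast; ring]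
      rw [norm_mul, hcastI _ (by nlinarith)]
      simp
    have a3 : ‖-(((m:ℂ)+2)*((m:ℂ)-1))‖ = ((m:ℝ)+2)*((m:ℝ)-1) := by
      rw [show (-(((m:ℂ)+2)*((m:ℂ)-1))) = ((((m:ℝ)+2)*((m:ℝ)-1) : ℝ):ℂ) * (-1 : ℝ) by push_cast; ring]
      rw [norm_mul, hcast _ (by nlinarith)]
      simp
    rw [a1, a2, a3]
    gcongr <;> nlinarith [norm_nonneg y0, norm_nonneg y1, norm_nonneg y2]
  have hMM : (0:ℝ) < (m:ℝ)*((m:ℝ)+3) := by positivity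
  have hq0 : (0:ℝ) ≤ t*(3*(m:ℝ)^2-11*(m:ℝ)-10) := mul_nonneg ht (by nlinarith)
  have hq1 : (0:ℝ) ≤ t*(3*(m:ℝ)^2+15*(m:ℝ)-2) := mul_nonneg ht (by nlinarith)
  have hq2 : (0:ℝ) ≤ t*(3*(m:ℝ)^2-19*(m:ℝ)+36) := mul_nonneg ht (by nlinarith)
  refine max_le ?_ (max_le ?_ ?_)
  · rw [div_mul_eq_mul_div, le_div_iff₀ (by nlinarith)]
    nlinarith [norm_nonneg x0, b0, hq0, hMM]
  · rw [div_mul_eq_mul_div, le_div_iff₀ (by nlinarith)]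
    nlinarith [norm_nonneg x1, b1, hq1, hMM]
  · rw [div_mul_eq_mul_div, le_div_iff₀ (by nlinarith)]
    nlinarith [norm_nonneg x2, b2, hq2, hMM]
/-- Let `m ≥ 8`, let `F = (F₁, F₂, F₃)` be polynomials of degree at most
`⌊(m+2)/2⌋`, and let `X = (X₁, X₂, X₃)` satisfy `X' = A_m X + F`, where `A_m` is the matrix
with rows `(−m−1, 10, 0)`, `(1/5, −m, −2i)`, `(−i/5, 2i, −m)`.  Then
`max |Xᵢ| ≤ 192 max |Fᵢ| / (m − 2)`. -/
theorem lorenz_Xm_bound (m : ℕ) (hm : 8 ≤ m)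
    (F X : Fin 3 → Polynomial ℂ)
    (hF : ∀ i, (F i).natDegree ≤ (m + 2) / 2)
    (hX : ∀ i, derivative (X i) =
      (∑ k, C ((!![-(m : ℂ) - 1, 10, 0;
                   1 / 5, -(m : ℂ), -(2 * I);
                   -(I / 5), 2 * I, -(m : ℂ)]) i k) * X k) + F i) :
    max (psiNorm (X 0)) (max (psiNorm (X 1)) (psiNorm (X 2))) ≤
      192 * max (psiNorm (F 0)) (max (psiNorm (F 1)) (psiNorm (F 2))) / ((m : ℝ) - 2) := by
  have hM : (8:ℝ) ≤ (m:ℝ) := by exact_mod_cast hm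
  have hm2 : (0:ℝ) < (m:ℝ) - 2 := by linarith
  set N : ℕ := (m + 2) / 2 with hN
  set β : ℝ := 13 / (10*((m:ℝ)-2)) with hβdef
  have hβ : 0 ≤ β := by positivity
  set n : ℕ → ℝ := fun k => max (‖(X 0).coeff k‖)
      (max (2 * ‖(X 1).coeff k‖) (4 * ‖(X 2).coeff k‖)) with hn_def
  set φ : ℕ → ℝ := fun k => max (‖(F 0).coeff k‖)
      (max (2 * ‖(F 1).coeff k‖) (4 * ‖(F 2).coeff k‖)) with hφ_def
  have hn : ∀ k, 0 ≤ n k := by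
    intro k; simp only [hn_def]
    exact le_trans (norm_nonneg _) (le_max_left _ _)
  have hφ : ∀ k, 0 ≤ φ k := by
    intro k; simp only [hφ_def]
    exact le_trans (norm_nonneg _) (le_max_left _ _)
  have n0 : ∀ k, ‖(X 0).coeff k‖ ≤ n k := by
    intro k; simp only [hn_def]; exact le_max_left _ _
  have n1 : ∀ k, 2 * ‖(X 1).coeff k‖ ≤ n k := by
    intro k; simp only [hn_def]; exact le_trans (le_max_left _ _) (le_max_right _ _)
  have n2 : ∀ k, 4 * ‖(X 2).coeff k‖ ≤ n k := by
    intro k; simp only [hn_def]; exact le_trans (le_max_right _ _) (le_max_right _ _)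
  have p0 : ∀ k, ‖(F 0).coeff k‖ ≤ φ k := by
    intro k; simp only [hφ_def]; exact le_max_left _ _
  have p1 : ∀ k, 2 * ‖(F 1).coeff k‖ ≤ φ k := by
    intro k; simp only [hφ_def]; exact le_trans (le_max_left _ _) (le_max_right _ _)
  have p2 : ∀ k, 4 * ‖(F 2).coeff k‖ ≤ φ k := by
    intro k; simp only [hφ_def]; exact le_trans (le_max_right _ _) (le_max_right _ _)
  -- coefficient equations
  have E0 : ∀ k : ℕ, (-(m:ℂ)-1) * (X 0).coeff k + 10 * (X 1).coeff k + 0 * (X 2).coeff k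
      = ((k:ℂ)+1) * (X 0).coeff (k+1) - (F 0).coeff k := by
    intro k
    have h := congrArg (fun p => Polynomial.coeff p k) (hX 0)
    simp only [Polynomial.coeff_derivative, Fin.sum_univ_three, Polynomial.coeff_add,
      Polynomial.coeff_C_mul, Matrix.cons_val', Matrix.cons_val_zero, Matrix.cons_val_one,
      Matrix.head_cons, Matrix.empty_val', Matrix.cons_val_fin_one, Matrix.head_fin_const,
      Matrix.cons_val_two, Matrix.tail_cons, Matrix.of_apply] at h
    linear_combination -h
  have E1 : ∀ k : ℕ, (1/5 : ℂ) * (X 0).coeff k + (-(m:ℂ)) * (X 1).coeff k + (-(2*I)) * (X 2).coeff k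
      = ((k:ℂ)+1) * (X 1).coeff (k+1) - (F 1).coeff k := by
    intro k
    have h := congrArg (fun p => Polynomial.coeff p k) (hX 1)
    simp only [Polynomial.coeff_derivative, Fin.sum_univ_three, Polynomial.coeff_add,
      Polynomial.coeff_C_mul, Matrix.cons_val', Matrix.cons_val_zero, Matrix.cons_val_one,
      Matrix.head_cons, Matrix.empty_val', Matrix.cons_val_fin_one, Matrix.head_fin_const,
      Matrix.cons_val_two, Matrix.tail_cons, Matrix.of_apply] at h
    linear_combination -h
  have E2 : ∀ k : ℕ, (-(I/5)) * (X 0).coeff k + (2*I) * (X 1).coeff k + (-(m:ℂ)) * (X 2).coeff k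
      = ((k:ℂ)+1) * (X 2).coeff (k+1) - (F 2).coeff k := by
    intro k
    have h := congrArg (fun p => Polynomial.coeff p k) (hX 2)
    simp only [Polynomial.coeff_derivative, Fin.sum_univ_three, Polynomial.coeff_add,
      Polynomial.coeff_C_mul, Matrix.cons_val', Matrix.cons_val_zero, Matrix.cons_val_one,
      Matrix.head_cons, Matrix.empty_val', Matrix.cons_val_fin_one, Matrix.head_fin_const,
      Matrix.cons_val_two, Matrix.tail_cons, Matrix.of_apply] at h
    linear_combination -h
  have hsub : ∀ a b : ℂ, ‖a - b‖ ≤ ‖a‖ + ‖b‖ := by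
    intro a b
    exact norm_sub_le a b
  have habsk : ∀ (k : ℕ) (z : ℂ), ‖((k:ℂ)+1) * z‖ = ((k:ℝ)+1) * ‖z‖ := by
    intro k z
    rw [norm_mul]
    congr 1
    rw [show ((k:ℂ)+1) = ((((k:ℝ)+1) : ℝ) : ℂ) by push_cast; ring, Complex.norm_real, Real.norm_eq_abs,
      _root_.abs_of_nonneg (by positivity)]
  -- recursion inequality
  have hrec : ∀ k, n k ≤ β * (((k:ℝ)+1) * n (k+1) + φ k) := by
    intro k
    have hk1 : (0:ℝ) ≤ (k:ℝ)+1 := by positivity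
    have hy0 : ‖((k:ℂ)+1) * (X 0).coeff (k+1) - (F 0).coeff k‖
        ≤ ((k:ℝ)+1) * n (k+1) + φ k := by
      refine le_trans (hsub _ _) ?_
      rw [habsk]
      have := mul_le_mul_of_nonneg_left (n0 (k+1)) hk1
      have := p0 k
      linarith
    have hy1 : ‖((k:ℂ)+1) * (X 1).coeff (k+1) - (F 1).coeff k‖
        ≤ (((k:ℝ)+1) * n (k+1) + φ k) / 2 := by
      refine le_trans (hsub _ _) ?_
      rw [habsk]
      have h1 : ‖(X 1).coeff (k+1)‖ ≤ n (k+1) / 2 := by linarith [n1 (k+1)]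
      have := mul_le_mul_of_nonneg_left h1 hk1
      have := p1 k
      linarith
    have hy2 : ‖((k:ℂ)+1) * (X 2).coeff (k+1) - (F 2).coeff k‖
        ≤ (((k:ℝ)+1) * n (k+1) + φ k) / 4 := by
      refine le_trans (hsub _ _) ?_
      rw [habsk]
      have h1 : ‖(X 2).coeff (k+1)‖ ≤ n (k+1) / 4 := by linarith [n2 (k+1)]
      have := mul_le_mul_of_nonneg_left h1 hk1
      have := p2 k
      linarith
    have hkey := key_bound m hm ((X 0).coeff k) ((X 1).coeff k) ((X 2).coeff k)
      _ _ _ (((k:ℝ)+1) * n (k+1) + φ k) (E0 k) (E1 k) (E2 k) hy0 hy1 hy2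
    have heq : n k = max (‖(X 0).coeff k‖) (max (2 * ‖(X 1).coeff k‖) (4 * ‖(X 2).coeff k‖)) := by
      simp only [hn_def]
    rw [heq, hβdef]
    exact hkey
  -- vanishing of φ beyond N
  have hφvan : ∀ k, N < k → φ k = 0 := by
    intro k hk
    have h0 : (F 0).coeff k = 0 :=
      Polynomial.coeff_eq_zero_of_natDegree_lt (lt_of_le_of_lt (hF 0) hk)
    have h1 : (F 1).coeff k = 0 :=
      Polynomial.coeff_eq_zero_of_natDegree_lt (lt_of_le_of_lt (hF 1) hk)
    have h2 : (F 2).coeff k = 0 :=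
      Polynomial.coeff_eq_zero_of_natDegree_lt (lt_of_le_of_lt (hF 2) hk)
    simp only [hφ_def, h0, h1, h2, norm_zero]
    norm_num
  -- vanishing of n beyond N
  have hvan : ∀ k, N < k → n k = 0 := by
    set K0 : ℕ := max (X 0).natDegree (max (X 1).natDegree (X 2).natDegree) with hK0
    have hbig : ∀ k, K0 < k → n k = 0 := by
      intro k hk
      have hd0 : (X 0).natDegree ≤ K0 := le_max_left _ _
      have hd1 : (X 1).natDegree ≤ K0 := le_trans (le_max_left _ _) (le_max_right _ _)
      have hd2 : (X 2).natDegree ≤ K0 := le_trans (le_max_right _ _) (le_max_right _ _)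
      have h0 : (X 0).coeff k = 0 := Polynomial.coeff_eq_zero_of_natDegree_lt (by omega)
      have h1 : (X 1).coeff k = 0 := Polynomial.coeff_eq_zero_of_natDegree_lt (by omega)
      have h2 : (X 2).coeff k = 0 := Polynomial.coeff_eq_zero_of_natDegree_lt (by omega)
      simp only [hn_def, h0, h1, h2, norm_zero]
      norm_num
    have Q : ∀ j k, N < k → K0 < k + j → n k = 0 := by
      intro j
      induction j with
      | zero => intro k h1 h2; exact hbig k (by omega)
      | succ j ih =>
        intro k h1 h2
        by_cases hc : K0 < k
        · exact hbig k hc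
        · have hnk1 : n (k+1) = 0 := ih (k+1) (by omega) (by omega)
          have h3 : n k ≤ β * (((k:ℝ)+1) * n (k+1) + φ k) := hrec k
          rw [hnk1, hφvan k h1] at h3
          simp at h3
          have := hn k
          linarith
    intro k hk
    exact Q (K0+1) k hk (by omega)
  -- arithmetic bounds for aux_sum
  have h2N : (2 * N : ℝ) ≤ (m:ℝ) + 2 := by
    have : 2 * N ≤ m + 2 := by omega
    exact_mod_cast this
  have hb1 : β * (N:ℝ) ≤ 13/12 := by
    rw [hβdef, div_mul_eq_mul_div, div_le_iff₀ (by positivity)]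
    linarith
  have hb2 : β * ((N:ℝ)-1) ≤ 13/15 := by
    rw [hβdef, div_mul_eq_mul_div, div_le_iff₀ (by positivity)]
    linarith
  have hS := aux_sum N β hβ n φ hn hφ hrec hvan hb1 hb2
  -- extension lemma for psiNorm
  have hext : ∀ (p : Polynomial ℂ) (R : ℕ), p.natDegree < R →
      psiNorm p = ∑ k ∈ Finset.range R, ‖p.coeff k‖ := by
    intro p R h
    unfold psiNorm
    apply Finset.sum_subset
    · exact Finset.range_subset_range.mpr (by omega)
    · intro k _ hk'
      have hk2 : p.natDegree + 1 ≤ k := by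
        by_contra hcon
        exact hk' (Finset.mem_range.mpr (by omega))
      rw [Polynomial.coeff_eq_zero_of_natDegree_lt (by omega)]
      simp
  -- bounding psiNorm (X i) by the sum of n
  have hXsum : ∀ (i : Fin 3) (hcomp : ∀ k, ‖(X i).coeff k‖ ≤ n k),
      psiNorm (X i) ≤ ∑ k ∈ Finset.range (N+1), n k := by
    intro i hcomp
    set R : ℕ := max ((X i).natDegree + 1) (N+1) with hR
    have h1 : psiNorm (X i) = ∑ k ∈ Finset.range R, ‖(X i).coeff k‖ :=
      hext _ _ (by omega)
    have h2 : ∑ k ∈ Finset.range R, ‖(X i).coeff k‖ ≤ ∑ k ∈ Finset.range R, n k :=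
      Finset.sum_le_sum fun k _ => hcomp k
    have h3 : ∑ k ∈ Finset.range (N+1), n k = ∑ k ∈ Finset.range R, n k := by
      apply Finset.sum_subset
      · exact Finset.range_subset_range.mpr (by omega)
      · intro k _ hk'
        have : N + 1 ≤ k := by
          by_contra hcon
          exact hk' (Finset.mem_range.mpr (by omega))
        exact hvan k (by omega)
    rw [h1, h3]
    exact h2
  have hX0 : psiNorm (X 0) ≤ ∑ k ∈ Finset.range (N+1), n k := hXsum 0 n0
  have hX1 : psiNorm (X 1) ≤ ∑ k ∈ Finset.range (N+1), n k := by
    apply hXsum 1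
    intro k
    have := n1 k
    have := norm_nonneg ((X 1).coeff k)
    linarith
  have hX2 : psiNorm (X 2) ≤ ∑ k ∈ Finset.range (N+1), n k := by
    apply hXsum 2
    intro k
    have := n2 k
    have := norm_nonneg ((X 2).coeff k)
    linarith
  -- bounding sum of φ
  have hFsum : ∀ i : Fin 3, ∑ l ∈ Finset.range (N+1), ‖(F i).coeff l‖ = psiNorm (F i) := by
    intro i
    exact (hext (F i) (N+1) (by have := hF i; omega)).symm
  have hφsum : ∑ l ∈ Finset.range (N+1), φ l ≤
      psiNorm (F 0) + 2 * psiNorm (F 1) + 4 * psiNorm (F 2) := by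
    have hterm : ∀ l, φ l ≤ ‖(F 0).coeff l‖ + 2 * ‖(F 1).coeff l‖
        + 4 * ‖(F 2).coeff l‖ := by
      intro l
      have a0 := norm_nonneg ((F 0).coeff l)
      have a1 := norm_nonneg ((F 1).coeff l)
      have a2 := norm_nonneg ((F 2).coeff l)
      simp only [hφ_def]
      apply max_le (by linarith)
      exact max_le (by linarith) (by linarith)
    calc ∑ l ∈ Finset.range (N+1), φ l
        ≤ ∑ l ∈ Finset.range (N+1), (‖(F 0).coeff l‖
            + 2 * ‖(F 1).coeff l‖ + 4 * ‖(F 2).coeff l‖) :=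
          Finset.sum_le_sum fun l _ => hterm l
      _ = ∑ l ∈ Finset.range (N+1), ‖(F 0).coeff l‖
            + 2 * ∑ l ∈ Finset.range (N+1), ‖(F 1).coeff l‖
            + 4 * ∑ l ∈ Finset.range (N+1), ‖(F 2).coeff l‖ := by
          rw [Finset.sum_add_distrib, Finset.sum_add_distrib, ← Finset.mul_sum, ← Finset.mul_sum]
      _ = psiNorm (F 0) + 2 * psiNorm (F 1) + 4 * psiNorm (F 2) := by
          rw [hFsum 0, hFsum 1, hFsum 2]
  -- final combination
  set Φ : ℝ := max (psiNorm (F 0)) (max (psiNorm (F 1)) (psiNorm (F 2))) with hΦdef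
  have hΦ0 : psiNorm (F 0) ≤ Φ := le_max_left _ _
  have hΦ1 : psiNorm (F 1) ≤ Φ := le_trans (le_max_left _ _) (le_max_right _ _)
  have hΦ2 : psiNorm (F 2) ≤ Φ := le_trans (le_max_right _ _) (le_max_right _ _)
  have hΦnn : 0 ≤ Φ := by
    have : (0:ℝ) ≤ psiNorm (F 0) := Finset.sum_nonneg fun k _ => norm_nonneg _
    linarith
  have hmain : ∑ k ∈ Finset.range (N+1), n k ≤ β * (73/8) * (7 * Φ) := by
    have h1 : ∑ l ∈ Finset.range (N+1), φ l ≤ 7 * Φ := by linarith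
    have h2 : 0 ≤ β * (73/8) := by positivity
    calc ∑ k ∈ Finset.range (N+1), n k ≤ β * (73/8) * ∑ l ∈ Finset.range (N+1), φ l := hS
      _ ≤ β * (73/8) * (7 * Φ) := mul_le_mul_of_nonneg_left h1 h2
  have hlast : β * (73/8) * (7 * Φ) ≤ 192 * Φ / ((m:ℝ) - 2) := by
    have heq : β * (73/8) * (7 * Φ) = (6643/80) * Φ / ((m:ℝ)-2) := by
      rw [hβdef]
      field_simp
      ring
    rw [heq]
    apply (div_le_div_iff_of_pos_right hm2).mpr
    nlinarith
  refine max_le ?_ (max_le ?_ ?_)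
  · calc psiNorm (X 0) ≤ ∑ k ∈ Finset.range (N+1), n k := hX0
      _ ≤ β * (73/8) * (7 * Φ) := hmain
      _ ≤ 192 * Φ / ((m:ℝ) - 2) := hlast
  · calc psiNorm (X 1) ≤ ∑ k ∈ Finset.range (N+1), n k := hX1
      _ ≤ β * (73/8) * (7 * Φ) := hmain
      _ ≤ 192 * Φ / ((m:ℝ) - 2) := hlast
  · calc psiNorm (X 2) ≤ ∑ k ∈ Finset.range (N+1), n k := hX2
      _ ≤ β * (73/8) * (7 * Φ) := hmain
      _ ≤ 192 * Φ / ((m:ℝ) - 2) := hlast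
end

section
/- Let (x_m)_{m ≥ 0} be a sequence of nonnegative real numbers such that for all m ≥ 8, x_m = 960 x_{m−1} + 896 x_{m−2} + 32 ∑_{j=1}^{m−1} x_{m−j−1} x_{j−1}. Then there exist positive constants K₁ and K₂ such that x_m ≤ K₁ K₂^m for all m ≥ 0. -/
set_option maxHeartbeats 1000000

lemma aux_sum_inv_sq' : ∀ n : ℕ, 1 ≤ n →
    ∑ j ∈ Finset.Icc 1 n, (1:ℝ)/(j:ℝ)^2 ≤ 2 - 1/(n:ℝ) := by
  intro n hn
  induction n, hn using Nat.le_induction with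
  | base => norm_num
  | succ n hn ih =>
    rw [Finset.sum_Icc_succ_top (by omega)]
    have hn' : (1:ℝ) ≤ (n:ℝ) := by exact_mod_cast hn
    push_cast
    have h1 : (1:ℝ)/((n:ℝ)+1)^2 ≤ 1/(n:ℝ) - 1/((n:ℝ)+1) := by
      rw [div_sub_div _ _ (by linarith) (by linarith)]
      rw [div_le_div_iff₀ (by positivity) (by nlinarith)]
      nlinarith
    linarith

lemma aux_sum_inv_sq (n : ℕ) : ∑ j ∈ Finset.Icc 1 n, (1:ℝ)/(j:ℝ)^2 ≤ 2 := by
  rcases Nat.eq_zero_or_pos n with h | h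
  · simp [h]
  · have := aux_sum_inv_sq' n h
    have : (0:ℝ) < n := by exact_mod_cast h
    have := aux_sum_inv_sq' n h
    have hpos : (0:ℝ) ≤ 1/(n:ℝ) := by positivity
    linarith


lemma aux_reflect (m : ℕ) :
    ∑ j ∈ Finset.Icc 1 (m-1), (1:ℝ)/(((m-j:ℕ)):ℝ)^2
      = ∑ j ∈ Finset.Icc 1 (m-1), (1:ℝ)/(j:ℝ)^2 := by
  refine Finset.sum_nbij' (fun j => m - j) (fun j => m - j) ?_ ?_ ?_ ?_ ?_ <;>
      simp only [Finset.mem_Icc] <;> intro a ha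
  · omega
  · omega
  · omega
  · omega
  · trivial

lemma aux_conv (m : ℕ) (hm : 8 ≤ m) :
    ∑ j ∈ Finset.Icc 1 (m-1), (1:ℝ)/((((m-j:ℕ)):ℝ)^2 * (j:ℝ)^2) ≤ 8/(m:ℝ)^2 := by
  have hM : (0:ℝ) < (m:ℝ) := by exact_mod_cast (by omega : 0 < m)
  have hterm : ∀ j ∈ Finset.Icc 1 (m-1),
      (1:ℝ)/((((m-j:ℕ)):ℝ)^2 * (j:ℝ)^2)
        ≤ 2/(m:ℝ)^2 * ((1:ℝ)/(((m-j:ℕ)):ℝ)^2 + (1:ℝ)/(j:ℝ)^2) := by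
    intro j hj
    simp only [Finset.mem_Icc] at hj
    set u : ℝ := (((m-j:ℕ)):ℝ) with hu
    have hu1 : (1:ℝ) ≤ u := by
      rw [hu]; exact_mod_cast (by omega : 1 ≤ m - j)
    have hv1 : (1:ℝ) ≤ (j:ℝ) := by exact_mod_cast hj.1
    have huv : u + (j:ℝ) = (m:ℝ) := by
      rw [hu]; push_cast [Nat.cast_sub (by omega : j ≤ m)]; ring
    have key : (m:ℝ)^2 ≤ 2*(u^2+(j:ℝ)^2) := by nlinarith [sq_nonneg (u-(j:ℝ))]
    rw [div_add_div _ _ (by positivity) (by positivity), div_mul_div_comm,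
      div_le_div_iff₀ (by positivity) (by positivity)]
    nlinarith [mul_le_mul_of_nonneg_right key
      (show (0:ℝ) ≤ u^2*(j:ℝ)^2 by positivity)]
  calc ∑ j ∈ Finset.Icc 1 (m-1), (1:ℝ)/((((m-j:ℕ)):ℝ)^2 * (j:ℝ)^2)
      ≤ ∑ j ∈ Finset.Icc 1 (m-1),
          2/(m:ℝ)^2 * ((1:ℝ)/(((m-j:ℕ)):ℝ)^2 + (1:ℝ)/(j:ℝ)^2) :=
        Finset.sum_le_sum hterm
    _ = 2/(m:ℝ)^2 * ((∑ j ∈ Finset.Icc 1 (m-1), (1:ℝ)/(((m-j:ℕ)):ℝ)^2)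
          + ∑ j ∈ Finset.Icc 1 (m-1), (1:ℝ)/(j:ℝ)^2) := by
        rw [← Finset.mul_sum, Finset.sum_add_distrib]
    _ ≤ 2/(m:ℝ)^2 * (2 + 2) := by
        rw [aux_reflect]
        have := aux_sum_inv_sq (m-1)
        have h2 : (0:ℝ) ≤ 2/(m:ℝ)^2 := by positivity
        nlinarith
    _ = 8/(m:ℝ)^2 := by ring

/-- If `(x_m)` is a sequence of nonnegative reals satisfying, for all `m ≥ 8`,
`x_m = 960 x_{m−1} + 896 x_{m−2} + 32 ∑_{j=1}^{m−1} x_{m−j−1} x_{j−1}`, then there exist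
positive constants `K₁, K₂` with `x_m ≤ K₁ K₂^m` for all `m ≥ 0`. -/
theorem majorant_geometric_growth (x : ℕ → ℝ) (hpos : ∀ m, 0 ≤ x m)
    (hrec : ∀ m, 8 ≤ m →
      x m = 960 * x (m - 1) + 896 * x (m - 2) +
        32 * ∑ j ∈ Finset.Icc 1 (m - 1), x (m - j - 1) * x (j - 1)) :
    ∃ K₁ K₂ : ℝ, 0 < K₁ ∧ 0 < K₂ ∧ ∀ m : ℕ, x m ≤ K₁ * K₂ ^ m := by
  set C : ℝ := (∑ k ∈ Finset.range 8, 64 * x k) + 1 with hCdef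
  clear_value C
  have hC1 : 1 ≤ C := by
    have h0 : 0 ≤ ∑ k ∈ Finset.range 8, 64 * x k :=
      Finset.sum_nonneg fun k _ => by have := hpos k; linarith
    rw [hCdef]; linarith
  set r : ℝ := 512 * C + 3904 with hrdef
  clear_value r
  have hr : 3904 ≤ r := by rw [hrdef]; linarith
  have hr1 : (1:ℝ) ≤ r := by linarith
  have hrpos : (0:ℝ) < r := by linarith
  have key : ∀ m : ℕ, x m * ((m:ℝ)+1)^2 ≤ C * r^m := by
    intro m
    induction m using Nat.strong_induction_on with
    | _ m ih =>
      by_cases h8 : m < 8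
      · have h1 : x m * ((m:ℝ)+1)^2 ≤ 64 * x m := by
          have hm7 : (m:ℝ) ≤ 7 := by exact_mod_cast (by omega : m ≤ 7)
          have hm0 : (0:ℝ) ≤ (m:ℝ) := by positivity
          have hx := hpos m
          have hsq : ((m:ℝ)+1)^2 ≤ 64 := by nlinarith
          nlinarith [mul_le_mul_of_nonneg_left hsq hx]
        have h2 : 64 * x m ≤ ∑ k ∈ Finset.range 8, 64 * x k :=
          Finset.single_le_sum (f := fun k => 64 * x k)
            (fun k _ => by show (0:ℝ) ≤ 64 * x k; have := hpos k; linarith)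
            (Finset.mem_range.mpr h8)
        have hpw : (1:ℝ) ≤ r ^ m := one_le_pow₀ hr1
        have h3 : C ≤ C * r ^ m := le_mul_of_one_le_right (by linarith) hpw
        have h4 : 64 * x m ≤ C := by rw [hCdef]; linarith
        linarith
      · push_neg at h8
        have hm8 : 8 ≤ m := h8
        set M : ℝ := (m:ℝ) with hMdef
        clear_value M
        have hM8 : (8:ℝ) ≤ M := by rw [hMdef]; exact_mod_cast hm8
        set P : ℝ := r^(m-2) with hPdef
        clear_value P
        have hPpos : (0:ℝ) < P := by rw [hPdef]; positivity
        have hA : x (m-1) * M^2 ≤ C * (P * r) := by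
          have h := ih (m-1) (by omega)
          have e1 : ((m-1:ℕ):ℝ) + 1 = M := by
            rw [hMdef]; push_cast [Nat.cast_sub (by omega : 1 ≤ m)]; ring
          have e2 : r^(m-1) = P * r := by rw [hPdef, ← pow_succ]; congr 1; omega
          rw [e1, e2] at h; exact h
        have hB : x (m-2) * (M-1)^2 ≤ C * P := by
          have h := ih (m-2) (by omega)
          have e1 : ((m-2:ℕ):ℝ) + 1 = M - 1 := by
            rw [hMdef]; push_cast [Nat.cast_sub (by omega : 2 ≤ m)]; ring
          rw [e1, ← hPdef] at h; exact h
        have hterm : ∀ j ∈ Finset.Icc 1 (m-1),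
            x (m-j-1) * x (j-1) ≤ (C^2 * P) * ((1:ℝ)/((((m-j:ℕ)):ℝ)^2 * (j:ℝ)^2)) := by
          intro j hj
          simp only [Finset.mem_Icc] at hj
          have h1 := ih (m-j-1) (by omega)
          have h2 := ih (j-1) (by omega)
          have e1 : ((m-j-1:ℕ):ℝ) + 1 = ((m-j:ℕ):ℝ) := by
            have h : (m-j-1) + 1 = m - j := by omega
            exact_mod_cast congrArg (Nat.cast : ℕ → ℝ) h
          have e2 : ((j-1:ℕ):ℝ) + 1 = (j:ℝ) := by
            have h : (j-1) + 1 = j := by omega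
            exact_mod_cast congrArg (Nat.cast : ℕ → ℝ) h
          rw [e1] at h1; rw [e2] at h2
          have hu : (0:ℝ) < ((m-j:ℕ):ℝ) := by exact_mod_cast (by omega : 0 < m - j)
          have hv : (0:ℝ) < (j:ℝ) := by exact_mod_cast (by omega : 0 < j)
          have b1 : x (m-j-1) ≤ C * r^(m-j-1) / ((m-j:ℕ):ℝ)^2 := by
            rw [le_div_iff₀ (by positivity)]; exact h1
          have b2 : x (j-1) ≤ C * r^(j-1) / (j:ℝ)^2 := by
            rw [le_div_iff₀ (by positivity)]; exact h2
          have hrr : r^(m-j-1) * r^(j-1) = P := by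
            rw [hPdef, ← pow_add]; congr 1; omega
          calc x (m-j-1) * x (j-1)
              ≤ (C * r^(m-j-1) / ((m-j:ℕ):ℝ)^2) * (C * r^(j-1) / (j:ℝ)^2) :=
                mul_le_mul b1 b2 (hpos _) (by positivity)
            _ = (C^2 * (r^(m-j-1) * r^(j-1))) * ((1:ℝ)/((((m-j:ℕ)):ℝ)^2 * (j:ℝ)^2)) := by
                ring
            _ = (C^2 * P) * ((1:ℝ)/((((m-j:ℕ)):ℝ)^2 * (j:ℝ)^2)) := by rw [hrr]
        have hsum_nonneg : (0:ℝ) ≤ ∑ j ∈ Finset.Icc 1 (m-1), x (m-j-1) * x (j-1) :=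
          Finset.sum_nonneg fun j _ => mul_nonneg (hpos _) (hpos _)
        have hMpos : (0:ℝ) < M := by linarith
        have hS : (∑ j ∈ Finset.Icc 1 (m-1), x (m-j-1) * x (j-1)) * M^2 ≤ 8 * (C^2 * P) := by
          have h1 : ∑ j ∈ Finset.Icc 1 (m-1), x (m-j-1) * x (j-1)
              ≤ (C^2*P) * ∑ j ∈ Finset.Icc 1 (m-1), (1:ℝ)/((((m-j:ℕ)):ℝ)^2 * (j:ℝ)^2) := by
            rw [Finset.mul_sum]; exact Finset.sum_le_sum hterm
          have h2 := aux_conv m hm8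
          have h3 : (C^2*P) * (∑ j ∈ Finset.Icc 1 (m-1), (1:ℝ)/((((m-j:ℕ)):ℝ)^2 * (j:ℝ)^2))
              ≤ (C^2*P) * (8/M^2) := by
            apply mul_le_mul_of_nonneg_left _ (by positivity)
            rw [hMdef]; exact h2
          calc (∑ j ∈ Finset.Icc 1 (m-1), x (m-j-1) * x (j-1)) * M^2
              ≤ ((C^2*P) * (8/M^2)) * M^2 :=
                mul_le_mul_of_nonneg_right (le_trans h1 h3) (by positivity)
            _ = 8 * (C^2 * P) := by field_simp
        rw [hrec m hm8]
        have hrm : C * r^m = C * (P * r^2) := by rw [hPdef, ← pow_add]; congr 2; omega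
        rw [hrm]
        have hq1 : (M+1)^2 ≤ 2*M^2 := by nlinarith
        have hq2 : (M+1)^2 ≤ 2*(M-1)^2 := by nlinarith
        have hx1 := hpos (m-1)
        have hx2 := hpos (m-2)
        have f1 : x (m-1) * (M+1)^2 ≤ 2*(C*(P*r)) := by
          nlinarith [mul_le_mul_of_nonneg_left hq1 hx1]
        have f2 : x (m-2) * (M+1)^2 ≤ 2*(C*P) := by
          nlinarith [mul_le_mul_of_nonneg_left hq2 hx2]
        have f3 : (∑ j ∈ Finset.Icc 1 (m-1), x (m-j-1) * x (j-1)) * (M+1)^2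
            ≤ 16 * (C^2 * P) := by
          nlinarith [mul_le_mul_of_nonneg_left hq1 hsum_nonneg]
        have hkey : 1920*r + 1792 + 512*C ≤ r^2 := by
          have h5 : 3904 * r ≤ r^2 := by nlinarith
          rw [hrdef]; nlinarith
        have hfin : 1920*(C*(P*r)) + 1792*(C*P) + 512*(C^2*P) ≤ C*(P*r^2) := by
          have h6 := mul_le_mul_of_nonneg_left hkey
            (show (0:ℝ) ≤ C*P by positivity)
          nlinarith
        nlinarith [f1, f2, f3, hfin]
  refine ⟨C, r, by linarith, by linarith, fun m => ?_⟩
  have h := key m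
  have h1 : (1:ℝ) ≤ ((m:ℝ)+1)^2 := by nlinarith [Nat.cast_nonneg (α := ℝ) m]
  nlinarith [hpos m, mul_le_mul_of_nonneg_left h1 (hpos m)]
end

section
/- Let K₁, K₂ > 0 be real, C ∈ ℂ, t₀ ∈ ℂ, and b ∈ ℂ with |b| = 1. Let (p_m)_{m ≥ 0} be polynomials in ℂ[w] with deg p_m ≤ ⌊(m+2)/2⌋ and |p_m| ≤ K₁ K₂^m for all m ≥ 0. Let r > 0 satisfy r < 1/K₂ and r(|log r| + π + |C|) < 1/K₂. Then for every t ∈ ℂ with 0 < |t − t₀| ≤ r and t not in the branch cut {t₀ − conj(b)·ρ : ρ ∈ ℝ, ρ ≥ 0}, the series ∑_{m=0}^∞ p_m(log(b(t − t₀)) + C) · (t − t₀)^m converges absolutely (the family of its terms is summable in ℂ), where log denotes the principal branch of the complex logarithm. -/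
lemma key_mono (A s u : ℝ) (hA : 1 ≤ A) (hs : 0 < s) (hsu : s ≤ u) (hu1 : u ≤ 1) :
    s * (-Real.log s + A) ≤ u * (-Real.log u + A) := by
  have hu : 0 < u := lt_of_lt_of_le hs hsu
  have h1 : Real.log (u / s) ≤ u / s - 1 := Real.log_le_sub_one_of_pos (by positivity)
  rw [Real.log_div (ne_of_gt hu) (ne_of_gt hs)] at h1
  have h2 : s * (Real.log u - Real.log s) ≤ u - s := by
    have := mul_le_mul_of_nonneg_left h1 hs.le
    calc s * (Real.log u - Real.log s) ≤ s * (u / s - 1) := this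
      _ = u - s := by field_simp
  have hlu : Real.log u ≤ 0 := Real.log_nonpos hu.le hu1
  nlinarith [mul_le_mul_of_nonneg_right hsu (neg_nonneg.mpr hlu)]

lemma key_mono' (A s r : ℝ) (hA : 1 ≤ A) (hs : 0 < s) (hsr : s ≤ r) :
    s * (|Real.log s| + A) ≤ r * (|Real.log r| + A) := by
  have hr : 0 < r := lt_of_lt_of_le hs hsr
  rcases le_or_gt 1 s with h1s | h1s
  · have h1r : 1 ≤ r := le_trans h1s hsr
    rw [abs_of_nonneg (Real.log_nonneg h1s), abs_of_nonneg (Real.log_nonneg h1r)]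
    have := Real.log_le_log hs hsr
    nlinarith [Real.log_nonneg h1s]
  · rw [abs_of_nonpos (Real.log_nonpos hs.le h1s.le)]
    rcases le_or_gt r 1 with h1r | h1r
    · rw [abs_of_nonpos (Real.log_nonpos hr.le h1r)]
      exact key_mono A s r hA hs hsr h1r
    · have : s * (-Real.log s + A) ≤ 1 * (-Real.log 1 + A) :=
        key_mono A s 1 hA hs h1s.le le_rfl
      rw [Real.log_one] at this
      have hA' : A ≤ r * (|Real.log r| + A) := by
        nlinarith [abs_nonneg (Real.log r)]
      linarith

/-- Let `K₁, K₂ > 0`, `C, t₀, b ∈ ℂ` with `|b| = 1`, and let `(p_m)` be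
polynomials with `deg p_m ≤ ⌊(m+2)/2⌋` and `|p_m| ≤ K₁ K₂^m`.  If `r > 0` satisfies
`r < 1/K₂` and `r (|log r| + π + |C|) < 1/K₂`, then for every `t` with `0 < |t − t₀| ≤ r`
not on the branch cut `{t₀ − conj(b) ρ : ρ ≥ 0}`, the psi series
`∑_m p_m (log(b(t − t₀)) + C) (t − t₀)^m` converges absolutely, i.e. the family of its
terms is summable in `ℂ`. -/
theorem psi_series_convergence
    (K₁ K₂ : ℝ) (hK₁ : 0 < K₁) (hK₂ : 0 < K₂)
    (C t₀ b : ℂ) (hb : ‖b‖ = 1)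
    (p : ℕ → Polynomial ℂ)
    (hdeg : ∀ m, (p m).natDegree ≤ (m + 2) / 2)
    (hnorm : ∀ m, psiNorm (p m) ≤ K₁ * K₂ ^ m)
    (r : ℝ) (hr : 0 < r) (hr1 : r < 1 / K₂)
    (hr2 : r * (|Real.log r| + Real.pi + ‖C‖) < 1 / K₂)
    (t : ℂ) (ht0 : 0 < ‖t - t₀‖) (htr : ‖t - t₀‖ ≤ r)
    (hcut : t ∉ {s : ℂ | ∃ ρ : ℝ, 0 ≤ ρ ∧ s = t₀ - (starRingEnd ℂ) b * ρ}) :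
    Summable (fun m : ℕ =>
      (p m).eval (Complex.log (b * (t - t₀)) + C) * (t - t₀) ^ m) := by
  set s : ℝ := ‖t - t₀‖ with hs
  set z : ℂ := Complex.log (b * (t - t₀)) + C with hz
  set A : ℝ := Real.pi + ‖C‖ with hA
  have hA1 : 1 ≤ A := by
    have := Real.pi_gt_three
    have := norm_nonneg C
    simp only [hA]; linarith
  have habsw : ‖b * (t - t₀)‖ = s := by
    rw [norm_mul, hb, one_mul]
  have hzL : ‖z‖ ≤ |Real.log s| + A := by
    have h1 : ‖z‖ ≤ ‖Complex.log (b * (t - t₀))‖ + ‖C‖ :=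
      norm_add_le _ _
    have h2 : ‖Complex.log (b * (t - t₀))‖ ≤ |Real.log s| + Real.pi := by
      refine (Complex.norm_le_abs_re_add_abs_im _).trans ?_
      rw [Complex.log_re, Complex.log_im, habsw]
      have h3 : |Complex.arg (b * (t - t₀))| ≤ Real.pi := Complex.abs_arg_le_pi _
      linarith
    rw [hA]; linarith
  set Mx : ℝ := max 1 ‖z‖ with hMx
  have hM1 : (1:ℝ) ≤ Mx := le_max_left _ _
  have hM0 : (0:ℝ) ≤ Mx := by linarith
  set N : ℝ := Real.sqrt Mx with hN
  have hN1 : (1:ℝ) ≤ N := by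
    rw [hN, show (1:ℝ) = Real.sqrt 1 by simp]
    exact Real.sqrt_le_sqrt hM1
  have hN2 : N ^ 2 = Mx := Real.sq_sqrt hM0
  have hN0 : (0:ℝ) ≤ N := by linarith
  set q : ℝ := K₂ * s * N with hq
  have hq0 : 0 ≤ q := by positivity
  have hkey : s * (|Real.log s| + A) < 1 / K₂ :=
    lt_of_le_of_lt (key_mono' A s r hA1 ht0 htr) (by rw [hA]; linarith [hr2])
  have hML : Mx ≤ |Real.log s| + A := by
    refine max_le ?_ hzL
    have : (0:ℝ) ≤ |Real.log s| := abs_nonneg _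
    linarith
  have hsK : K₂ * s < 1 := by
    have h : s < 1 / K₂ := lt_of_le_of_lt htr hr1
    rw [lt_div_iff₀ hK₂] at h; linarith
  have hsLK : K₂ * (s * (|Real.log s| + A)) < 1 := by
    rw [← lt_div_iff₀' hK₂]; exact hkey
  have hq1 : q < 1 := by
    have hqq : q ^ 2 = (K₂ * s) * (K₂ * (s * Mx)) := by
      have h : q ^ 2 = K₂ ^ 2 * s ^ 2 * N ^ 2 := by rw [hq]; ring
      rw [h, hN2]; ring
    have hq2 : q ^ 2 < 1 := by
      rw [hqq]
      have h1 : K₂ * (s * Mx) ≤ K₂ * (s * (|Real.log s| + A)) := by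
        have := mul_le_mul_of_nonneg_left hML (le_of_lt ht0)
        nlinarith
      calc (K₂ * s) * (K₂ * (s * Mx)) ≤ (K₂ * s) * (K₂ * (s * (|Real.log s| + A))) := by
            apply mul_le_mul_of_nonneg_left h1; positivity
        _ < 1 * 1 := mul_lt_mul' hsK.le hsLK (by positivity) (by linarith)
        _ = 1 := one_mul 1
    nlinarith
  have hbound : ∀ m : ℕ, ‖(p m).eval z * (t - t₀) ^ m‖ ≤ (K₁ * Mx) * q ^ m := by
    intro m
    rw [norm_mul, norm_pow, ← hs]
    have hzM : ‖z‖ ≤ Mx := le_max_right _ _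
    have heval : ‖(p m).eval z‖ ≤ psiNorm (p m) * Mx ^ (p m).natDegree := by
      rw [Polynomial.eval_eq_sum_range]
      refine (norm_sum_le _ _).trans ?_
      unfold psiNorm
      rw [Finset.sum_mul]
      refine Finset.sum_le_sum fun i hi => ?_
      rw [norm_mul, norm_pow]
      have hi' : i ≤ (p m).natDegree := Nat.lt_succ_iff.mp (Finset.mem_range.mp hi)
      have c0 : (0:ℝ) ≤ ‖(p m).coeff i‖ := norm_nonneg _
      calc ‖(p m).coeff i‖ * ‖z‖ ^ i
          ≤ ‖(p m).coeff i‖ * Mx ^ i :=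
            mul_le_mul_of_nonneg_left (pow_le_pow_left₀ (norm_nonneg _) hzM i) c0
        _ ≤ ‖(p m).coeff i‖ * Mx ^ (p m).natDegree :=
            mul_le_mul_of_nonneg_left (pow_le_pow_right₀ hM1 hi') c0
    have hMd : Mx ^ (p m).natDegree ≤ Mx * N ^ m := by
      calc Mx ^ (p m).natDegree ≤ Mx ^ ((m + 2) / 2) := pow_le_pow_right₀ hM1 (hdeg m)
        _ = N ^ (2 * ((m + 2) / 2)) := by rw [pow_mul, hN2]
        _ ≤ N ^ (m + 2) := pow_le_pow_right₀ hN1 (by omega)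
        _ = N ^ 2 * N ^ m := by ring
        _ = Mx * N ^ m := by rw [hN2]
    have hnn : (0:ℝ) ≤ psiNorm (p m) :=
      Finset.sum_nonneg fun i _ => norm_nonneg _
    have hs0 : (0:ℝ) ≤ s := le_of_lt ht0
    have hsm : (0:ℝ) ≤ s ^ m := pow_nonneg hs0 m
    have step1 := mul_le_mul_of_nonneg_right heval hsm
    have step2 : psiNorm (p m) * Mx ^ (p m).natDegree ≤ (K₁ * K₂ ^ m) * (Mx * N ^ m) :=
      mul_le_mul (hnorm m) hMd (pow_nonneg hM0 _)
        (mul_nonneg hK₁.le (pow_nonneg hK₂.le m))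
    have step3 := mul_le_mul_of_nonneg_right step2 hsm
    have hring : (K₁ * K₂ ^ m) * (Mx * N ^ m) * s ^ m = (K₁ * Mx) * q ^ m := by
      rw [hq]; ring
    linarith
  exact Summable.of_norm_bounded
    ((summable_geometric_of_lt_one hq0 hq1).mul_left (K₁ * Mx)) hbound
end
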